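/- arXiv:1912.08863 — 5 statements merged into one kernel-verified Lean document; each statement's English description precedes it below -/
import Mathlib

section
/- The value function u : (0,∞) → ℝ ∪ {+∞} of utility maximization with proportional transaction costs is continuous: for every x > 0, u(x) = lim_{y→x} u(y), where the limit is taken in the extended reals (a priori the common value may equal +∞). -/
open MeasureTheory Set Filter
open scoped ENNReal

/-- The (signed) Lebesgue–Stieltjes integral `∫_{[0,t]} S dγ`, where the trading strategy
`γ_u = μ([0,u])` is encoded by its signed Lebesgue–Stieltjes measure `μ` (the convention
`γ_{0−} = 0` means the jump at time `0` is included). -/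
noncomputable def stieltjesIntegral (S : ℝ → ℝ) (μ : SignedMeasure ℝ) (t : ℝ) : ℝ :=
  (∫ u in Icc 0 t, S u ∂μ.toJordanDecomposition.posPart) -
    (∫ u in Icc 0 t, S u ∂μ.toJordanDecomposition.negPart)

/-- The integral `∫_{[0,t]} S |dγ|` against the total variation measure of `γ`. -/
noncomputable def totalVarIntegral (S : ℝ → ℝ) (μ : SignedMeasure ℝ) (t : ℝ) : ℝ :=
  ∫ u in Icc 0 t, S u ∂μ.totalVariation

/-- The portfolio value `V^γ_t = γ_t S_t − ∫_{[0,t]} S dγ − κ|γ_t| S_t − κ ∫_{[0,t]} S |dγ|`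
under proportional transaction costs of rate `κ`, with `γ_u = μ([0,u])`. -/
noncomputable def portfolioValue (κ : ℝ) (S : ℝ → ℝ) (μ : SignedMeasure ℝ) (t : ℝ) : ℝ :=
  μ (Icc 0 t) * S t - stieltjesIntegral S μ t - κ * |μ (Icc 0 t)| * S t -
    κ * totalVarIntegral S μ t

/-- The positive part of an extended real number, as an element of `ℝ≥0∞`. -/
noncomputable def erealPos (y : EReal) : ℝ≥0∞ :=
  if y = ⊤ then ⊤ else ENNReal.ofReal y.toReal

/-- The expectation `E[X]` of an extended-real random variable, with the convention
`E[X] := −∞` whenever `E[max(−X,0)] = ∞` (as in the paper). -/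
noncomputable def eExp {Ω : Type} [MeasurableSpace Ω] (P : Measure Ω) (X : Ω → EReal) :
    EReal :=
  ((∫⁻ ω, erealPos (X ω) ∂P : ℝ≥0∞) : EReal) - ((∫⁻ ω, erealPos (-(X ω)) ∂P : ℝ≥0∞) : EReal)

section Helpers

lemma erealPos_top : erealPos ⊤ = ⊤ := by simp [erealPos]

lemma erealPos_bot : erealPos ⊥ = 0 := by simp [erealPos]

lemma erealPos_coe (x : ℝ) : erealPos (x : EReal) = ENNReal.ofReal x := by
  simp [erealPos]

lemma erealPos_mono {x y : EReal} (h : x ≤ y) : erealPos x ≤ erealPos y := by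
  by_cases hy : y = ⊤
  · simp [hy, erealPos_top]
  by_cases hx : x = ⊥
  · simp [hx, erealPos_bot]
  have hx' : x ≠ ⊤ := fun hh => hy (top_le_iff.1 (hh ▸ h))
  simp only [erealPos, if_neg hy, if_neg hx']
  exact ENNReal.ofReal_le_ofReal (EReal.toReal_le_toReal h hx hy)

lemma coe_ennreal_eq_coe_toReal {A : ℝ≥0∞} (hA : A ≠ ⊤) :
    (A : EReal) = ((A.toReal : ℝ) : EReal) := by
  rw [← ENNReal.ofReal_toReal hA, EReal.coe_ennreal_ofReal,
    max_eq_left ENNReal.toReal_nonneg, ENNReal.ofReal_toReal hA]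

lemma erealPos_mul_pos {c : ℝ} (hc : 0 < c) (x : EReal) :
    erealPos ((c : EReal) * x) = ENNReal.ofReal c * erealPos x := by
  induction x using EReal.rec with
  | bot => rw [EReal.coe_mul_bot_of_pos hc, erealPos_bot, mul_zero]
  | coe x => rw [← EReal.coe_mul, erealPos_coe, erealPos_coe, ENNReal.ofReal_mul hc.le]
  | top =>
      rw [EReal.coe_mul_top_of_pos hc, erealPos_top, ENNReal.mul_top]
      simp [ENNReal.ofReal_eq_zero, not_le, hc]

lemma erealPos_sub_le (x : EReal) (g : ℝ) :
    erealPos x ≤ erealPos (x - (g : EReal)) + ENNReal.ofReal g := by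
  induction x using EReal.rec with
  | bot => simp [erealPos_bot]
  | coe x =>
      rw [← EReal.coe_sub, erealPos_coe, erealPos_coe]
      calc ENNReal.ofReal x = ENNReal.ofReal ((x - g) + g) := by ring_nf
        _ ≤ ENNReal.ofReal (x - g) + ENNReal.ofReal g := ENNReal.ofReal_add_le
  | top => rw [EReal.top_sub_coe, erealPos_top]; simp

lemma erealPos_neg_sub_le (x : EReal) (g : ℝ) :
    erealPos (-(x - (g : EReal))) ≤ erealPos (-x) + ENNReal.ofReal g := by
  induction x using EReal.rec with
  | bot => rw [EReal.bot_sub, EReal.neg_bot, erealPos_top]; simp [erealPos_top]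
  | coe x =>
      rw [← EReal.coe_sub, ← EReal.coe_neg, ← EReal.coe_neg, erealPos_coe, erealPos_coe]
      calc ENNReal.ofReal (-(x - g)) = ENNReal.ofReal ((-x) + g) := by ring_nf
        _ ≤ ENNReal.ofReal (-x) + ENNReal.ofReal g := ENNReal.ofReal_add_le
  | top => rw [EReal.top_sub_coe, EReal.neg_top, erealPos_bot]; simp

lemma eExp_mono {Ω : Type} [MeasurableSpace Ω] (P : Measure Ω) {X Y : Ω → EReal}
    (h : ∀ᵐ ω ∂P, X ω ≤ Y ω) : eExp P X ≤ eExp P Y := by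
  refine EReal.sub_le_sub ?_ ?_
  · exact EReal.coe_ennreal_le_coe_ennreal_iff.2 <|
      lintegral_mono_ae (h.mono fun ω hω => erealPos_mono hω)
  · exact EReal.coe_ennreal_le_coe_ennreal_iff.2 <|
      lintegral_mono_ae (h.mono fun ω hω => erealPos_mono (EReal.neg_le_neg_iff.2 hω))

lemma eExp_affine {Ω : Type} [MeasurableSpace Ω] (P : Measure Ω) (X : Ω → EReal) {c : ℝ}
    (hc : 0 < c) {g : Ω → ℝ} (hg0 : ∀ ω, 0 ≤ g ω) (hg : Integrable g P) :
    (c : EReal) * eExp P X - ((2 * ∫ ω, g ω ∂P : ℝ) : EReal) ≤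
      eExp P (fun ω => (c : EReal) * X ω - ((g ω : ℝ) : EReal)) := by
  set Z : Ω → EReal := fun ω => (c : EReal) * X ω - ((g ω : ℝ) : EReal) with hZ
  set Ap := ∫⁻ ω, erealPos (X ω) ∂P with hAp
  set Am := ∫⁻ ω, erealPos (-(X ω)) ∂P with hAm
  set Zp := ∫⁻ ω, erealPos (Z ω) ∂P with hZp
  set Zm := ∫⁻ ω, erealPos (-(Z ω)) ∂P with hZm
  have hgae : AEMeasurable (fun ω => ENNReal.ofReal (g ω)) P :=
    ENNReal.measurable_ofReal.comp_aemeasurable hg.aemeasurable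
  have hGnn : 0 ≤ ∫ ω, g ω ∂P := integral_nonneg hg0
  set G := ENNReal.ofReal (∫ ω, g ω ∂P) with hGdef
  have hG : (∫⁻ ω, ENNReal.ofReal (g ω) ∂P) = G :=
    (ofReal_integral_eq_lintegral_ofReal hg (Filter.Eventually.of_forall hg0)).symm
  have hGne : G ≠ ⊤ := ENNReal.ofReal_ne_top
  have hcne : ENNReal.ofReal c ≠ ⊤ := ENNReal.ofReal_ne_top
  have hcne0 : ENNReal.ofReal c ≠ 0 := by simp [ENNReal.ofReal_eq_zero, not_le, hc]
  have h1 : ENNReal.ofReal c * Ap ≤ Zp + G := by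
    calc ENNReal.ofReal c * Ap = ∫⁻ ω, ENNReal.ofReal c * erealPos (X ω) ∂P :=
          (lintegral_const_mul' _ _ hcne).symm
      _ = ∫⁻ ω, erealPos ((c : EReal) * X ω) ∂P := by
          simp_rw [erealPos_mul_pos hc]
      _ ≤ ∫⁻ ω, (erealPos (Z ω) + ENNReal.ofReal (g ω)) ∂P :=
          lintegral_mono fun ω => erealPos_sub_le _ _
      _ = Zp + G := by rw [lintegral_add_right' _ hgae, hG]
  have h2 : Zm ≤ ENNReal.ofReal c * Am + G := by
    calc Zm ≤ ∫⁻ ω, (erealPos (-((c : EReal) * X ω)) + ENNReal.ofReal (g ω)) ∂P :=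
          lintegral_mono fun ω => erealPos_neg_sub_le _ _
      _ = ∫⁻ ω, (ENNReal.ofReal c * erealPos (-(X ω)) + ENNReal.ofReal (g ω)) ∂P := by
          congr 1; funext ω
          rw [← erealPos_mul_pos hc]
          rw [show (c : EReal) * -X ω = -((c : EReal) * X ω) from by
            rw [mul_comm, EReal.neg_mul, mul_comm]]
      _ = ENNReal.ofReal c * Am + G := by
          rw [lintegral_add_right' _ hgae, lintegral_const_mul' _ _ hcne, hG]
  rw [eExp, ← hAp, ← hAm, eExp, ← hZp, ← hZm]
  by_cases hAmtop : Am = ⊤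
  · rw [hAmtop, EReal.coe_ennreal_top]
    have : (Ap : EReal) - ⊤ = ⊥ := by
      rw [sub_eq_add_neg, EReal.neg_top, EReal.add_bot]
    rw [this, EReal.mul_bot_of_pos (by exact_mod_cast hc), EReal.bot_sub]
    exact bot_le
  by_cases hAptop : Ap = ⊤
  · have hZptop : Zp = ⊤ := by
      by_contra hne
      have : ENNReal.ofReal c * Ap = ⊤ := by
        rw [hAptop, ENNReal.mul_top hcne0]
      rw [this] at h1
      exact (ENNReal.add_ne_top.2 ⟨hne, hGne⟩) (top_le_iff.1 h1)
    have hZmne : Zm ≠ ⊤ :=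
      ne_top_of_le_ne_top (ENNReal.add_ne_top.2 ⟨ENNReal.mul_ne_top hcne hAmtop, hGne⟩) h2
    rw [hZptop, EReal.coe_ennreal_top, coe_ennreal_eq_coe_toReal hZmne, EReal.top_sub_coe]
    exact le_top
  by_cases hZptop : Zp = ⊤
  · have hZmne : Zm ≠ ⊤ :=
      ne_top_of_le_ne_top (ENNReal.add_ne_top.2 ⟨ENNReal.mul_ne_top hcne hAmtop, hGne⟩) h2
    rw [hZptop, EReal.coe_ennreal_top, coe_ennreal_eq_coe_toReal hZmne, EReal.top_sub_coe]
    exact le_top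
  · have hZmne : Zm ≠ ⊤ :=
      ne_top_of_le_ne_top (ENNReal.add_ne_top.2 ⟨ENNReal.mul_ne_top hcne hAmtop, hGne⟩) h2
    have e1 : c * Ap.toReal ≤ Zp.toReal + (∫ ω, g ω ∂P) := by
      have := ENNReal.toReal_mono (ENNReal.add_ne_top.2 ⟨hZptop, hGne⟩) h1
      rw [ENNReal.toReal_mul, ENNReal.toReal_add hZptop hGne, ENNReal.toReal_ofReal hc.le,
        hGdef, ENNReal.toReal_ofReal hGnn] at this
      exact this
    have e2 : Zm.toReal ≤ c * Am.toReal + (∫ ω, g ω ∂P) := by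
      have := ENNReal.toReal_mono (ENNReal.add_ne_top.2
        ⟨ENNReal.mul_ne_top hcne hAmtop, hGne⟩) h2
      rw [ENNReal.toReal_add (ENNReal.mul_ne_top hcne hAmtop) hGne, ENNReal.toReal_mul,
        ENNReal.toReal_ofReal hc.le, hGdef, ENNReal.toReal_ofReal hGnn] at this
      exact this
    rw [coe_ennreal_eq_coe_toReal hAptop, coe_ennreal_eq_coe_toReal hAmtop,
      coe_ennreal_eq_coe_toReal hZptop, coe_ennreal_eq_coe_toReal hZmne,
      ← EReal.coe_sub, ← EReal.coe_sub, ← EReal.coe_mul, ← EReal.coe_sub]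
    exact_mod_cast by nlinarith [e1, e2]

lemma portfolioValue_zero (κ : ℝ) (S : ℝ → ℝ) (t : ℝ) :
    portfolioValue κ S (0 : SignedMeasure ℝ) t = 0 := by
  simp [portfolioValue, stieltjesIntegral, totalVarIntegral,
    SignedMeasure.toJordanDecomposition_zero, SignedMeasure.totalVariation_zero]

lemma smul_measure_integral (Sf : ℝ → ℝ) (ν : Measure ℝ) {c : ℝ} (hc : 0 ≤ c) (t : ℝ) :
    (∫ u in Icc 0 t, Sf u ∂(c.toNNReal • ν)) = c * ∫ u in Icc 0 t, Sf u ∂ν := by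
  rw [show (c.toNNReal • ν) = ((c.toNNReal : ℝ≥0∞) • ν) from rfl, Measure.restrict_smul,
    integral_smul_measure]
  simp [Real.coe_toNNReal c hc]

lemma portfolioValue_smul (κ : ℝ) (S : ℝ → ℝ) (μ : SignedMeasure ℝ) {c : ℝ} (hc : 0 ≤ c)
    (t : ℝ) : portfolioValue κ S (c • μ) t = c * portfolioValue κ S μ t := by
  have hJD := μ.toJordanDecomposition_smul_real c
  have hpos : (c • μ).toJordanDecomposition.posPart
      = c.toNNReal • μ.toJordanDecomposition.posPart := by
    rw [hJD, JordanDecomposition.real_smul_posPart_nonneg _ _ hc]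
  have hneg : (c • μ).toJordanDecomposition.negPart
      = c.toNNReal • μ.toJordanDecomposition.negPart := by
    rw [hJD, JordanDecomposition.real_smul_negPart_nonneg _ _ hc]
  have htv : (c • μ).totalVariation = c.toNNReal • μ.totalVariation := by
    rw [SignedMeasure.totalVariation, hpos, hneg, SignedMeasure.totalVariation, smul_add]
  have happ : (c • μ) (Icc 0 t) = c * μ (Icc 0 t) := by
    rw [VectorMeasure.smul_apply]; rfl
  rw [portfolioValue, portfolioValue, stieltjesIntegral, stieltjesIntegral, hpos, hneg,
    totalVarIntegral, totalVarIntegral, htv, happ, smul_measure_integral _ _ hc,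
    smul_measure_integral _ _ hc, smul_measure_integral _ _ hc, abs_mul, abs_of_nonneg hc]
  ring

end Helpers

/-- Lemma 4.1 of the paper: continuity of the value function of utility maximization with
proportional transaction costs. The market is a strictly positive continuous adapted price
process `S` on a filtered probability space satisfying the usual conditions; a trading
strategy is an adapted right-continuous process of bounded variation with `γ_{0−} = 0` and
`γ_T = 0` (encoded, pathwise, by the signed Lebesgue–Stieltjes measure `μ(ω)`, with
`γ_t = μ(ω)([0,t])`); `A(y)` is the class of strategies with `y + V^γ_t ≥ 0` on `[0,T]`.
The utility `U(v,s)` is an extended-real-valued function, finite, nondecreasing, concave and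
jointly continuous on `(0,∞) × C[0,T]`, extended to `v = 0` by its right limit, satisfying
Assumption (i) (`E[U(x,S)] > −∞` for `x > 0`) and Assumption (ii) (moduli of continuity
`m₁, m₂` and `ζ ∈ L¹(P)`). Then the value function
`u(y) = sup_{γ ∈ A(y)} E[U(y + V^γ_T, S)]` (with values in `ℝ ∪ {+∞}`) satisfies



`u(x) = lim_{y→x} u(y)` at every `x > 0`. -/
theorem stmt_1 {Ω : Type} [m0 : MeasurableSpace Ω] (P : Measure Ω) [IsProbabilityMeasure P]
    (T κ : ℝ) (hT : 0 < T) (hκ : κ ∈ Set.Ioo (0:ℝ) 1)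
    (F : MeasureTheory.Filtration ℝ m0)
    -- usual conditions: right-continuity and completeness of the filtration
    (hFright : ∀ t : ℝ, (F t : MeasurableSpace Ω) = ⨅ (s : ℝ) (_ : t < s), F s)
    (hFcomplete : ∀ A : Set Ω, MeasurableSet A → P A = 0 → MeasurableSet[F 0] A)
    -- the price process: strictly positive, continuous and adapted
    (S : Ω → C(Set.Icc (0:ℝ) T, ℝ))
    (hSpos : ∀ ω p, 0 < S ω p)
    (hSadapted : ∀ p : Set.Icc (0:ℝ) T, Measurable[F (p : ℝ)] fun ω => S ω p)
    -- the utility function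
    (U : ℝ → C(Set.Icc (0:ℝ) T, ℝ) → EReal)
    (hUfin : ∀ v : ℝ, 0 < v → ∀ s, U v s ≠ ⊤ ∧ U v s ≠ ⊥)
    (hUmono : ∀ s, ∀ v w : ℝ, 0 < v → v ≤ w → U v s ≤ U w s)
    (hUconc : ∀ s, ∀ v w : ℝ, 0 < v → 0 < w → ∀ p q : ℝ, 0 ≤ p → 0 ≤ q → p + q = 1 →
      (p : EReal) * U v s + (q : EReal) * U w s ≤ U (p * v + q * w) s)
    (hUcont : ContinuousOn (fun vs : ℝ × C(Set.Icc (0:ℝ) T, ℝ) => U vs.1 vs.2)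
      (Set.Ioi 0 ×ˢ Set.univ))
    (hU0 : ∀ s, Filter.Tendsto (fun v => U v s) (nhdsWithin 0 (Set.Ioi 0)) (nhds (U 0 s)))
    -- Assumption (i)
    (hAi : ∀ x : ℝ, 0 < x → ⊥ < eExp P fun ω => U x (S ω))
    -- Assumption (ii)
    (m₁ m₂ : ℝ → ℝ)
    (hm₁c : ContinuousOn m₁ (Set.Ico 0 1)) (hm₂c : ContinuousOn m₂ (Set.Ico 0 1))
    (hm₁0 : m₁ 0 = 0) (hm₂0 : m₂ 0 = 0)
    (hm₁pos : ∀ l ∈ Set.Ico (0:ℝ) 1, 0 ≤ m₁ l) (hm₂pos : ∀ l ∈ Set.Ico (0:ℝ) 1, 0 ≤ m₂ l)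
    (ζ : Ω → ℝ) (hζpos : ∀ ω, 0 ≤ ζ ω) (hζint : Integrable ζ P)
    (hAii : ∀ l ∈ Set.Ioo (0:ℝ) 1, ∀ v : ℝ, 0 < v →
      ∀ᵐ ω ∂P,
        ((1 - m₁ l : ℝ) : EReal) * U v (S ω) - ((m₂ l * ζ ω : ℝ) : EReal) ≤
          U ((1 - l) * v) (S ω)) :
    ∀ x : ℝ, 0 < x →
      ContinuousWithinAt
        (fun y : ℝ =>
          ⨆ (μ : Ω → SignedMeasure ℝ) (_ :
            -- the strategy is adapted
            (∀ t ∈ Set.Icc (0:ℝ) T, Measurable[F t] fun ω => (μ ω) (Set.Icc 0 t)) ∧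
            -- liquidation at maturity
            (∀ ω, (μ ω) (Set.Icc 0 T) = 0) ∧
            -- admissibility
            (∀ᵐ ω ∂P, ∀ t ∈ Set.Icc (0:ℝ) T,
              0 ≤ y + portfolioValue κ (fun u => S ω (Set.projIcc 0 T hT.le u)) (μ ω) t)),
            eExp P fun ω =>
              U (y + portfolioValue κ (fun u => S ω (Set.projIcc 0 T hT.le u)) (μ ω) T)
                (S ω))
        (Set.Ioi 0) x := by
  classical
  intro x hx
  -- abbreviations
  set Sp : Ω → ℝ → ℝ := fun ω u => S ω (Set.projIcc 0 T hT.le u) with hSp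
  set Vv : (Ω → SignedMeasure ℝ) → Ω → ℝ → ℝ :=
    fun μ ω t => portfolioValue κ (Sp ω) (μ ω) t with hVv
  set Adm : ℝ → (Ω → SignedMeasure ℝ) → Prop := fun y μ =>
    (∀ t ∈ Set.Icc (0:ℝ) T, Measurable[F t] fun ω => (μ ω) (Set.Icc 0 t)) ∧
    (∀ ω, (μ ω) (Set.Icc 0 T) = 0) ∧
    (∀ᵐ ω ∂P, ∀ t ∈ Set.Icc (0:ℝ) T, 0 ≤ y + Vv μ ω t) with hAdm
  set eVal : ℝ → (Ω → SignedMeasure ℝ) → EReal := fun y μ =>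
    eExp P fun ω => U (y + Vv μ ω T) (S ω) with heVal
  set u : ℝ → EReal := fun y => ⨆ (μ : Ω → SignedMeasure ℝ) (_ : Adm y μ), eVal y μ with hu
  show Tendsto u (nhdsWithin x (Set.Ioi 0)) (nhds (u x))
  have hTmem : T ∈ Set.Icc (0:ℝ) T := ⟨hT.le, le_rfl⟩
  -- extended monotonicity of U
  have hUmono' : ∀ s, ∀ v w : ℝ, 0 ≤ v → v ≤ w → U v s ≤ U w s := by
    intro s v w hv hvw
    rcases eq_or_lt_of_le hv with h0 | h0
    · rcases eq_or_lt_of_le (h0 ▸ hvw : (0:ℝ) ≤ w) with h1 | h1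
      · rw [← h0, ← h1]
      · rw [← h0]
        refine le_of_tendsto (hU0 s) ?_
        filter_upwards [nhdsWithin_le_nhds (Iio_mem_nhds h1), self_mem_nhdsWithin]
          with z hz1 hz2 using hUmono s z w hz2 hz1.le
    · exact hUmono s v w h0 hvw
  have hUne_top : ∀ s, ∀ v : ℝ, 0 ≤ v → U v s ≠ ⊤ := by
    intro s v hv
    rcases eq_or_lt_of_le hv with h0 | h0
    · exact ne_top_of_le_ne_top (hUfin 1 one_pos s).1 (hUmono' s v 1 hv (by rw [← h0]; norm_num))
    · exact (hUfin v h0 s).1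
  -- continuity of U (·, s) from the right at every v ≥ 0
  have hUcont' : ∀ s, ∀ v : ℝ, 0 ≤ v →
      Tendsto (fun w => U w s) (nhdsWithin v (Set.Ioi 0)) (nhds (U v s)) := by
    intro s v hv
    rcases eq_or_lt_of_le hv with h0 | h0
    · rw [← h0]; exact hU0 s
    · have h1 : Tendsto (fun vs : ℝ × C(Set.Icc (0:ℝ) T, ℝ) => U vs.1 vs.2)
          (nhdsWithin (v, s) (Set.Ioi 0 ×ˢ Set.univ)) (nhds (U v s)) :=
        hUcont (v, s) ⟨h0, mem_univ _⟩
      have hmap : Tendsto (fun w : ℝ => (w, s)) (nhdsWithin v (Set.Ioi 0))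
          (nhdsWithin (v, s) (Set.Ioi 0 ×ˢ Set.univ)) := by
        refine tendsto_nhdsWithin_of_tendsto_nhds_of_eventually_within _ ?_ ?_
        · exact ((continuous_id.prodMk continuous_const).tendsto v).mono_left
            nhdsWithin_le_nhds
        · filter_upwards [self_mem_nhdsWithin] with w hw
          exact ⟨hw, mem_univ _⟩
      exact h1.comp hmap
  -- a.e. version of Assumption (ii), valid for all v ≥ 0 simultaneously
  have keyae : ∀ l ∈ Set.Ioo (0:ℝ) 1, m₁ l < 1 → ∀ᵐ ω ∂P, ∀ v : ℝ, 0 ≤ v →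
      ((1 - m₁ l : ℝ) : EReal) * U v (S ω) - ((m₂ l * ζ ω : ℝ) : EReal) ≤
        U ((1 - l) * v) (S ω) := by
    intro l hl hml
    have hc : (0:ℝ) < 1 - m₁ l := by linarith
    have hl1 : (0:ℝ) < 1 - l := by linarith [hl.2]
    have hQ : ∀ᵐ ω ∂P, ∀ q : {q : ℚ // 0 < ((q : ℚ) : ℝ)},
        ((1 - m₁ l : ℝ) : EReal) * U ((q : ℚ) : ℝ) (S ω) - ((m₂ l * ζ ω : ℝ) : EReal) ≤
          U ((1 - l) * ((q : ℚ) : ℝ)) (S ω) :=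
      ae_all_iff.2 fun q => hAii l hl ((q : ℚ) : ℝ) q.2
    filter_upwards [hQ] with ω hω
    intro v hv
    set s := S ω with hs
    by_cases hbotv : U v s = ⊥
    · rw [hbotv, EReal.coe_mul_bot_of_pos hc, EReal.bot_sub]
      exact bot_le
    -- choose rationals decreasing to v
    have hex : ∀ n : ℕ, ∃ q : ℚ, v < (q : ℝ) ∧ (q : ℝ) < v + 1/(n+1) := by
      intro n
      obtain ⟨q, hq1, hq2⟩ := exists_rat_btwn
        (lt_add_of_pos_right v (by positivity : (0:ℝ) < 1/(n+1)))
      exact ⟨q, hq1, hq2⟩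
    choose q hq1 hq2 using hex
    have hqpos : ∀ n, (0:ℝ) < (q n : ℝ) := fun n => lt_of_le_of_lt hv (hq1 n)
    have htend : Tendsto (fun n => ((q n : ℚ) : ℝ)) atTop (nhds v) := by
      have hup : Tendsto (fun n : ℕ => v + 1/(n+1)) atTop (nhds v) := by
        have := tendsto_one_div_add_atTop_nhds_zero_nat (𝕜 := ℝ)
        have h' := tendsto_const_nhds (x := v) (f := atTop (α := ℕ)) |>.add this
        simpa using h'
      exact tendsto_of_tendsto_of_tendsto_of_le_of_le tendsto_const_nhds hup
        (fun n => (hq1 n).le) (fun n => (hq2 n).le)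
    have htend' : Tendsto (fun n => ((q n : ℚ) : ℝ)) atTop (nhdsWithin v (Set.Ioi 0)) :=
      tendsto_nhdsWithin_of_tendsto_nhds_of_eventually_within _ htend
        (Eventually.of_forall fun n => hqpos n)
    have h1 : Tendsto (fun n => U ((q n : ℚ) : ℝ) s) atTop (nhds (U v s)) :=
      (hUcont' s v hv).comp htend'
    have htend2 : Tendsto (fun n => (1 - l) * ((q n : ℚ) : ℝ)) atTop
        (nhdsWithin ((1 - l) * v) (Set.Ioi 0)) :=
      tendsto_nhdsWithin_of_tendsto_nhds_of_eventually_within _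
        (htend.const_mul (1 - l))
        (Eventually.of_forall fun n => mul_pos hl1 (hqpos n))
    have h2 : Tendsto (fun n => U ((1 - l) * ((q n : ℚ) : ℝ)) s) atTop
        (nhds (U ((1 - l) * v) s)) :=
      (hUcont' s ((1 - l) * v) (mul_nonneg hl1.le hv)).comp htend2
    have hne_top : U v s ≠ ⊤ := hUne_top s v hv
    set r := (U v s).toReal with hr
    have hco : U v s = (r : EReal) := (EReal.coe_toReal hne_top hbotv).symm
    have h1r : Tendsto (fun n => (U ((q n : ℚ) : ℝ) s).toReal) atTop (nhds r) :=
      (EReal.tendsto_toReal hne_top hbotv).comp h1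
    have h1' : Tendsto (fun n => ((1 - m₁ l : ℝ) : EReal) * U ((q n : ℚ) : ℝ) s -
        ((m₂ l * ζ ω : ℝ) : EReal)) atTop
        (nhds (((1 - m₁ l : ℝ) : EReal) * U v s - ((m₂ l * ζ ω : ℝ) : EReal))) := by
      have hreal : Tendsto (fun n => (1 - m₁ l) * (U ((q n : ℚ) : ℝ) s).toReal -
          (m₂ l * ζ ω)) atTop (nhds ((1 - m₁ l) * r - m₂ l * ζ ω)) :=
        (h1r.const_mul _).sub tendsto_const_nhds
      have hcomp := (continuous_coe_real_ereal.tendsto _).comp hreal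
      have heq : (((1 - m₁ l) * r - m₂ l * ζ ω : ℝ) : EReal) =
          ((1 - m₁ l : ℝ) : EReal) * U v s - ((m₂ l * ζ ω : ℝ) : EReal) := by
        rw [EReal.coe_sub, EReal.coe_mul, hco]
      rw [← heq]
      refine Tendsto.congr (fun n => ?_) hcomp
      have hfin := hUfin ((q n : ℚ) : ℝ) (hqpos n) s
      rw [Function.comp_apply, EReal.coe_sub, EReal.coe_mul,
        EReal.coe_toReal hfin.1 hfin.2]
    exact le_of_tendsto_of_tendsto' h1' h2 fun n => hω ⟨q n, hqpos n⟩
  -- monotonicity of the value function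
  have hMono : ∀ y z : ℝ, 0 < y → y ≤ z → u y ≤ u z := by
    intro y z hy hyz
    refine iSup_le fun μ => iSup_le fun hμ => ?_
    have hμ' : Adm z μ := by
      refine ⟨hμ.1, hμ.2.1, ?_⟩
      filter_upwards [hμ.2.2] with ω hω t ht
      linarith [hω t ht]
    have hle : eVal y μ ≤ eVal z μ := by
      refine eExp_mono P ?_
      filter_upwards [hμ.2.2] with ω hω
      exact hUmono' (S ω) _ _ (hω T hTmem) (by linarith)
    exact le_trans hle (le_iSup_of_le μ (le_iSup_of_le hμ' le_rfl))
  -- key quantitative inequality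
  set Zi := ∫ ω, ζ ω ∂P with hZi
  have hZinn : 0 ≤ Zi := integral_nonneg hζpos
  set K : ℝ → ℝ := fun l => 2 * (m₂ l * Zi) with hK
  have hKey : ∀ l ∈ Set.Ioo (0:ℝ) 1, m₁ l < 1 → ∀ y : ℝ, 0 < y →
      ∀ μ, Adm y μ →
      ((1 - m₁ l : ℝ) : EReal) * eVal y μ - ((K l : ℝ) : EReal) ≤ u ((1 - l) * y) := by
    intro l hl hml y hy μ hμ
    have hc : (0:ℝ) < 1 - m₁ l := by linarith
    have hl1 : (0:ℝ) < 1 - l := by linarith [hl.2]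
    set μ' : Ω → SignedMeasure ℝ := fun ω => (1 - l) • μ ω with hμ'def
    have hVs : ∀ ω t, Vv μ' ω t = (1 - l) * Vv μ ω t := fun ω t =>
      portfolioValue_smul κ (Sp ω) (μ ω) hl1.le t
    have hadm2 : Adm ((1 - l) * y) μ' := by
      refine ⟨?_, ?_, ?_⟩
      · intro t ht
        have : (fun ω => (μ' ω) (Set.Icc 0 t)) = fun ω => (1 - l) * (μ ω) (Set.Icc 0 t) := by
          funext ω
          rw [hμ'def, VectorMeasure.smul_apply]; rfl
        rw [this]
        exact (hμ.1 t ht).const_mul _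
      · intro ω
        rw [hμ'def, VectorMeasure.smul_apply, hμ.2.1 ω]
        simp
      · filter_upwards [hμ.2.2] with ω hω t ht
        rw [hVs ω t]
        have h0 := hω t ht
        nlinarith
    have hval : eVal ((1 - l) * y) μ' =
        eExp P fun ω => U ((1 - l) * (y + Vv μ ω T)) (S ω) := by
      have harg : ∀ ω, (1 - l) * y + Vv μ' ω T = (1 - l) * (y + Vv μ ω T) := fun ω => by
        rw [hVs ω T]; ring
      simp only [heVal, harg]
    have step4 : eExp P (fun ω => ((1 - m₁ l : ℝ) : EReal) * U (y + Vv μ ω T) (S ω) -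
        ((m₂ l * ζ ω : ℝ) : EReal)) ≤ eVal ((1 - l) * y) μ' := by
      rw [hval]
      refine eExp_mono P ?_
      filter_upwards [keyae l hl hml, hμ.2.2] with ω hω hadm
      exact hω (y + Vv μ ω T) (hadm T hTmem)
    have step5 : ((1 - m₁ l : ℝ) : EReal) * eVal y μ - ((K l : ℝ) : EReal) ≤
        eExp P (fun ω => ((1 - m₁ l : ℝ) : EReal) * U (y + Vv μ ω T) (S ω) -
          ((m₂ l * ζ ω : ℝ) : EReal)) := by
      have := eExp_affine P (fun ω => U (y + Vv μ ω T) (S ω)) hc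
        (g := fun ω => m₂ l * ζ ω)
        (fun ω => mul_nonneg (hm₂pos l ⟨hl.1.le, hl.2⟩) (hζpos ω)) (hζint.const_mul _)
      have hint : (∫ ω, m₂ l * ζ ω ∂P) = m₂ l * Zi := by
        rw [hZi, integral_const_mul]
      rw [hint] at this
      rw [hK]
      convert this using 3
    calc ((1 - m₁ l : ℝ) : EReal) * eVal y μ - ((K l : ℝ) : EReal)
        ≤ eVal ((1 - l) * y) μ' := le_trans step5 step4
      _ ≤ u ((1 - l) * y) := le_iSup_of_le μ' (le_iSup_of_le hadm2 le_rfl)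
  -- the zero strategy shows u y > ⊥
  have hbot : ∀ y : ℝ, 0 < y → (⊥ : EReal) < u y := by
    intro y hy
    set μ0 : Ω → SignedMeasure ℝ := fun _ => (0 : SignedMeasure ℝ) with hμ0
    have hadm2 : Adm y μ0 := by
      refine ⟨fun t ht => ?_, fun ω => by simp [hμ0], ?_⟩
      · simp only [hμ0, VectorMeasure.coe_zero, Pi.zero_apply]
        exact measurable_const
      · filter_upwards [] with ω t ht
        rw [hVv]
        simp only [hμ0]
        rw [portfolioValue_zero]
        linarith
    have hval : eVal y μ0 = eExp P fun ω => U y (S ω) := by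
      have harg : ∀ ω, y + Vv μ0 ω T = y := fun ω => by
        show y + portfolioValue κ (Sp ω) (μ0 ω) T = y
        rw [show μ0 ω = 0 from rfl, portfolioValue_zero, add_zero]
      simp only [heVal, harg]
    have := hAi y hy
    rw [← hval] at this
    exact lt_of_lt_of_le this (le_iSup_of_le μ0 (le_iSup_of_le hadm2 le_rfl))
  -- limit machinery for the moduli
  have hIooIco : Set.Ioo (0:ℝ) 1 ⊆ Set.Ico 0 1 := Set.Ioo_subset_Ico_self
  have hm1t : Tendsto m₁ (nhdsWithin 0 (Set.Ioo (0:ℝ) 1)) (nhds 0) := by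
    have := (hm₁c 0 ⟨le_rfl, zero_lt_one⟩)
    rw [ContinuousWithinAt, hm₁0] at this
    exact this.mono_left (nhdsWithin_mono 0 hIooIco)
  have hm2t : Tendsto m₂ (nhdsWithin 0 (Set.Ioo (0:ℝ) 1)) (nhds 0) := by
    have := (hm₂c 0 ⟨le_rfl, zero_lt_one⟩)
    rw [ContinuousWithinAt, hm₂0] at this
    exact this.mono_left (nhdsWithin_mono 0 hIooIco)
  have hKt : Tendsto K (nhdsWithin 0 (Set.Ioo (0:ℝ) 1)) (nhds 0) := by
    have : Tendsto K (nhdsWithin 0 (Set.Ioo (0:ℝ) 1)) (nhds (2 * (0 * Zi))) :=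
      (tendsto_const_nhds.mul (hm2t.mul tendsto_const_nhds))
    simpa using this
  have hne : (nhdsWithin (0:ℝ) (Set.Ioo (0:ℝ) 1)).NeBot := by
    refine mem_closure_iff_nhdsWithin_neBot.mp ?_
    rw [closure_Ioo (by norm_num : (0:ℝ) ≠ 1)]
    exact ⟨le_rfl, zero_le_one⟩
  have hm1lt : ∀ᶠ l in nhdsWithin 0 (Set.Ioo (0:ℝ) 1), m₁ l < 1 :=
    hm1t.eventually_lt_const one_pos
  -- main continuity argument
  refine tendsto_order.2 ⟨?_, ?_⟩
  · -- lower bound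
    intro a ha
    by_cases hab : a = ⊥
    · subst hab
      filter_upwards [self_mem_nhdsWithin] with y hy using hbot y hy
    obtain ⟨μ, hrest⟩ := lt_iSup_iff.mp ha
    obtain ⟨hμ, hlt⟩ := lt_iSup_iff.mp hrest
    have hatop : a < ⊤ := lt_of_lt_of_le hlt le_top
    -- choose l
    have hchoice : ∃ l ∈ Set.Ioo (0:ℝ) 1, m₁ l < 1 ∧
        a < ((1 - m₁ l : ℝ) : EReal) * eVal x μ - ((K l : ℝ) : EReal) := by
      by_cases htop : eVal x μ = ⊤
      · obtain ⟨l, hl1, hl2⟩ := (hm1lt.and self_mem_nhdsWithin).exists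
        refine ⟨l, hl2, hl1, ?_⟩
        rw [htop, EReal.coe_mul_top_of_pos (by linarith), EReal.top_sub_coe]
        exact hatop
      · have hnb : eVal x μ ≠ ⊥ := by
          intro hh; rw [hh] at hlt; exact not_lt_bot hlt
        set e := (eVal x μ).toReal with he
        have hcoe : eVal x μ = (e : EReal) := (EReal.coe_toReal htop hnb).symm
        set ra := a.toReal with hra
        have hacoe : a = (ra : EReal) := (EReal.coe_toReal hatop.ne hab).symm
        have hae : ra < e := by
          rw [hacoe, hcoe] at hlt; exact_mod_cast hlt
        have htf : Tendsto (fun l => (1 - m₁ l) * e - K l)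
            (nhdsWithin 0 (Set.Ioo (0:ℝ) 1)) (nhds e) := by
          have h' := (((tendsto_const_nhds (x := (1:ℝ))).sub hm1t).mul
            (tendsto_const_nhds (x := e))).sub hKt
          simpa using h'
        have h1e : ∀ᶠ l in nhdsWithin 0 (Set.Ioo (0:ℝ) 1), ra < (1 - m₁ l) * e - K l :=
          htf.eventually_const_lt hae
        obtain ⟨l, hrae, hml, hmem⟩ := (h1e.and (hm1lt.and self_mem_nhdsWithin)).exists
        refine ⟨l, hmem, hml, ?_⟩
        rw [hcoe, hacoe]
        exact_mod_cast hrae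
    obtain ⟨l, hlmem, hml, hla⟩ := hchoice
    have hchain := hKey l hlmem hml x hx μ hμ
    have hlx : (1 - l) * x < x := by nlinarith [hlmem.1, hlmem.2]
    have hlxpos : 0 < (1 - l) * x := by nlinarith [hlmem.2]
    filter_upwards [nhdsWithin_le_nhds (Ioi_mem_nhds hlx), self_mem_nhdsWithin] with y h1y h2y
    exact lt_of_lt_of_le hla (le_trans hchain (hMono _ y hlxpos h1y.le))
  · -- upper bound
    intro b hb
    have hxnb : u x ≠ ⊥ := (hbot x hx).ne'
    have hxnt : u x ≠ ⊤ := ne_top_of_lt hb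
    set r := (u x).toReal with hr
    have hcoe : u x = (r : EReal) := (EReal.coe_toReal hxnt hxnb).symm
    have hg : Tendsto (fun l => (r + K l) / (1 - m₁ l))
        (nhdsWithin 0 (Set.Ioo (0:ℝ) 1)) (nhds r) := by
      have h' := ((tendsto_const_nhds (x := r)).add hKt).div
        ((tendsto_const_nhds (x := (1:ℝ))).sub hm1t) (by norm_num)
      simpa only [add_zero, sub_zero, div_one, Pi.div_def] using h'
    have hgb : ∀ᶠ l in nhdsWithin 0 (Set.Ioo (0:ℝ) 1),
        (((r + K l) / (1 - m₁ l) : ℝ) : EReal) < b := by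
      refine Tendsto.eventually_lt_const ?_ ((continuous_coe_real_ereal.tendsto r).comp hg)
      rw [← hcoe]; exact hb
    obtain ⟨l, hgb', hml, hmem⟩ := (hgb.and (hm1lt.and self_mem_nhdsWithin)).exists
    have hcpos : (0:ℝ) < 1 - m₁ l := by linarith
    have hl1 : (0:ℝ) < 1 - l := by linarith [hmem.2]
    set z := x / (1 - l) with hzdef
    have hzpos : 0 < z := div_pos hx hl1
    have hzx : (1 - l) * z = x := by
      rw [hzdef]; field_simp
    have hxz : x < z := by
      rw [← hzx]; nlinarith [hmem.1]
    have huz : u z ≤ (((r + K l) / (1 - m₁ l) : ℝ) : EReal) := by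
      refine iSup_le fun μ => iSup_le fun hμ => ?_
      have hchain := hKey l hmem hml z hzpos μ hμ
      rw [hzx, hcoe] at hchain
      by_cases htop' : eVal z μ = ⊤
      · exfalso
        rw [htop', EReal.coe_mul_top_of_pos hcpos, EReal.top_sub_coe] at hchain
        exact (EReal.coe_ne_top r) (top_le_iff.1 hchain)
      by_cases hbot' : eVal z μ = ⊥
      · rw [hbot']; exact bot_le
      · have hev : eVal z μ = ((eVal z μ).toReal : EReal) :=
          (EReal.coe_toReal htop' hbot').symm
        rw [hev] at hchain ⊢
        set ev := (eVal z μ).toReal with hevd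
        have hchainr : (1 - m₁ l) * ev - K l ≤ r := by exact_mod_cast hchain
        have h2 : ev ≤ (r + K l) / (1 - m₁ l) := by
          rw [le_div_iff₀ hcpos]; linarith
        exact_mod_cast h2
    filter_upwards [nhdsWithin_le_nhds (Iio_mem_nhds hxz), self_mem_nhdsWithin] with y h1y h2y
    exact lt_of_le_of_lt (le_trans (hMono y z h2y h1y.le) huz) hgb'
end

section
/- Let κ ∈ (0,1), ε ∈ (0,κ) and x > 0. Let S : [0,T] → (0,∞) be continuous, let M : [0,T] → ℝ be right-continuous with left limits and satisfy |M_t − S_t| ≤ (κ−ε) S_t for all t ∈ [0,T], and let γ : [0,T] → ℝ be right-continuous of bounded variation with the convention γ_{0−} = 0. If the admissibility condition x + V^γ_t ≥ 0 holds for all t ∈ [0,T], then for every t ∈ [0,T]: γ_t M_t − ∫_{[0,t]} M_{u−} dγ_u ≥ ε ∫_{[0,t]} S_u |dγ_u| − x. -/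
open MeasureTheory Set

/-- The dyadic approximation sequence from the left: it converges to `u` from within `Iio u`. -/
lemma aux_tendsto_seq (u : ℝ) :
    Filter.Tendsto (fun n : ℕ => (((⌈u * 2 ^ n⌉ : ℤ) : ℝ) - 1) / 2 ^ n)
      Filter.atTop (nhdsWithin u (Iio u)) := by
  have hpow : ∀ n : ℕ, (0 : ℝ) < 2 ^ n := fun n => by positivity
  apply tendsto_nhdsWithin_of_tendsto_nhds_of_eventually_within
  · apply tendsto_of_tendsto_of_tendsto_of_le_of_le
      (g := fun n : ℕ => u - (1 / 2 : ℝ) ^ n) (h := fun _ : ℕ => u)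
    · have h2 : Filter.Tendsto (fun n : ℕ => ((1:ℝ)/2) ^ n) Filter.atTop (nhds 0) :=
        tendsto_pow_atTop_nhds_zero_of_lt_one (by norm_num) (by norm_num)
      have := Filter.Tendsto.sub (tendsto_const_nhds (x := u)) h2
      simpa using this
    · exact tendsto_const_nhds
    · intro n
      simp only
      rw [div_pow, one_pow, sub_le_iff_le_add]
      rw [← add_div, le_div_iff₀ (hpow n)]
      have := Int.le_ceil (u * 2 ^ n)
      push_cast at this ⊢
      linarith
    · intro n
      simp only
      rw [div_le_iff₀ (hpow n)]
      have := Int.ceil_lt_add_one (u * 2 ^ n)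
      push_cast at this ⊢
      linarith
  · refine Filter.Eventually.of_forall fun n => ?_
    have := Int.ceil_lt_add_one (u * 2 ^ n)
    simp only [mem_Iio]
    rw [div_lt_iff₀ (hpow n)]
    push_cast at this ⊢
    linarith

/-- Key estimate in Step 1 of Lemma 4.3 of the paper: if `M` is a strictly consistent price
system, i.e. `|M − S| ≤ (κ − ε) S` on `[0,T]`, and the strategy `γ` (encoded by the signed
measure `μ`, `γ_t = μ([0,t])`) is admissible with initial capital `x`, then
`γ_t M_t − ∫_{[0,t]} M_{u−} dγ_u ≥ ε ∫_{[0,t]} S_u |dγ_u| − x` for every `t ∈ [0,T]`. -/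
theorem stmt_2 (T κ ε x : ℝ) (hT : 0 < T) (hκ : κ ∈ Set.Ioo (0 : ℝ) 1)
    (hε : ε ∈ Set.Ioo 0 κ) (hx : 0 < x)
    (S M : ℝ → ℝ) (hS : ContinuousOn S (Icc 0 T)) (hSpos : ∀ t ∈ Icc (0:ℝ) T, 0 < S t)
    (hMrc : ∀ t ∈ Ico (0:ℝ) T, ContinuousWithinAt M (Ici t) t)
    (hMll : ∀ t ∈ Ioc (0:ℝ) T, ∃ l, Filter.Tendsto M (nhdsWithin t (Iio t)) (nhds l))
    (hM0 : Function.leftLim M 0 = M 0)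
    (hMS : ∀ t ∈ Icc (0:ℝ) T, |M t - S t| ≤ (κ - ε) * S t)
    (μ : SignedMeasure ℝ)
    (hadm : ∀ t ∈ Icc (0:ℝ) T, 0 ≤ x + portfolioValue κ S μ t) :
    ∀ t ∈ Icc (0:ℝ) T,
      ε * totalVarIntegral S μ t - x ≤
        μ (Icc 0 t) * M t - stieltjesIntegral (Function.leftLim M) μ t := by
  -- notation
  set N : ℝ → ℝ := Function.leftLim M with hNdef
  -- a sequence realizing the left limit
  have hseq : ∀ u ∈ Ioc (0:ℝ) T,
      Filter.Tendsto (fun n : ℕ => M ((((⌈u * 2 ^ n⌉ : ℤ) : ℝ) - 1) / 2 ^ n))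
        Filter.atTop (nhds (N u)) := by
    intro u hu
    obtain ⟨l, hl⟩ := hMll u hu
    have hne : nhdsWithin u (Iio u) ≠ ⊥ := (nhdsLT_neBot u).ne'
    have : N u = l := leftLim_eq_of_tendsto hl
    rw [this]
    exact hl.comp (aux_tendsto_seq u)
  -- eventual membership of the sequence in Icc 0 T
  have hmem : ∀ u ∈ Ioc (0:ℝ) T, ∀ᶠ n : ℕ in Filter.atTop,
      (((⌈u * 2 ^ n⌉ : ℤ) : ℝ) - 1) / 2 ^ n ∈ Icc (0:ℝ) T := by
    intro u hu
    have h1 : ∀ᶠ n : ℕ in Filter.atTop,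
        (((⌈u * 2 ^ n⌉ : ℤ) : ℝ) - 1) / 2 ^ n ∈ Iio u :=
      (aux_tendsto_seq u).eventually (eventually_mem_nhdsWithin)
    have h2 : ∀ᶠ n : ℕ in Filter.atTop,
        (((⌈u * 2 ^ n⌉ : ℤ) : ℝ) - 1) / 2 ^ n ∈ Ioi (0:ℝ) := by
      apply (aux_tendsto_seq u).eventually
      exact Filter.eventually_mem_set.2 (mem_nhdsWithin_of_mem_nhds (Ioi_mem_nhds hu.1))
    filter_upwards [h1, h2] with n hn1 hn2
    exact ⟨le_of_lt hn2, le_trans (le_of_lt hn1) hu.2⟩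
  -- pointwise bound on the left-limit function
  have hNS : ∀ u ∈ Icc (0:ℝ) T, |N u - S u| ≤ (κ - ε) * S u := by
    intro u hu
    rcases eq_or_lt_of_le hu.1 with h0 | h0
    · rw [← h0, hM0]
      exact hMS 0 (by constructor <;> [rfl; exact hT.le])
    · have huT : u ∈ Ioc (0:ℝ) T := ⟨h0, hu.2⟩
      have hMt := hseq u huT
      have hmemt := hmem u huT
      have hSt : Filter.Tendsto (fun n : ℕ => S ((((⌈u * 2 ^ n⌉ : ℤ) : ℝ) - 1) / 2 ^ n))
          Filter.atTop (nhds (S u)) := by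
        apply (hS u hu).tendsto.comp
        apply tendsto_nhdsWithin_of_tendsto_nhds_of_eventually_within
        · exact (aux_tendsto_seq u).mono_right nhdsWithin_le_nhds
        · exact hmemt
      have hlhs : Filter.Tendsto
          (fun n : ℕ => |M ((((⌈u * 2 ^ n⌉ : ℤ) : ℝ) - 1) / 2 ^ n) -
            S ((((⌈u * 2 ^ n⌉ : ℤ) : ℝ) - 1) / 2 ^ n)|)
          Filter.atTop (nhds (|N u - S u|)) := (hMt.sub hSt).abs
      have hrhs : Filter.Tendsto
          (fun n : ℕ => (κ - ε) * S ((((⌈u * 2 ^ n⌉ : ℤ) : ℝ) - 1) / 2 ^ n))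
          Filter.atTop (nhds ((κ - ε) * S u)) := hSt.const_mul _
      refine le_of_tendsto_of_tendsto hlhs hrhs ?_
      filter_upwards [hmemt] with n hn
      exact hMS _ hn
  -- measurability of the left-limit function on (0, T]
  have hGmeas : Measurable (fun u => if u ∈ Ioc (0:ℝ) T then N u else M 0) := by
    apply measurable_of_tendsto_metrizable
      (f := fun n : ℕ => fun u : ℝ =>
        if u ∈ Ioc (0:ℝ) T then M ((((⌈u * 2 ^ n⌉ : ℤ) : ℝ) - 1) / 2 ^ n) else M 0)
    · intro n
      apply Measurable.ite measurableSet_Ioc ?_ measurable_const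
      have h1 : Measurable fun u : ℝ => (⌈u * 2 ^ n⌉ : ℤ) :=
        Int.measurable_ceil.comp (measurable_id.mul_const _)
      exact (measurable_of_countable (fun k : ℤ => M (((k : ℝ) - 1) / 2 ^ n))).comp h1
    · rw [tendsto_pi_nhds]
      intro u
      by_cases hu : u ∈ Ioc (0:ℝ) T
      · simp only [hu, if_pos]
        exact hseq u hu
      · simp only [hu, if_neg, if_false]
        exact tendsto_const_nhds
  -- main argument
  intro t ht
  set ν₁ := μ.toJordanDecomposition.posPart with hν₁
  set ν₂ := μ.toJordanDecomposition.negPart with hν₂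
  have hsub : Icc (0:ℝ) t ⊆ Icc 0 T := Icc_subset_Icc le_rfl ht.2
  have hScont : ContinuousOn S (Icc 0 t) := hS.mono hsub
  -- integrability of S
  have hIntS₁ : IntegrableOn S (Icc 0 t) ν₁ := hScont.integrableOn_compact isCompact_Icc
  have hIntS₂ : IntegrableOn S (Icc 0 t) ν₂ := hScont.integrableOn_compact isCompact_Icc
  -- a.e. strong measurability of N on Icc 0 t
  have hNaesm : ∀ ν : Measure ℝ, AEStronglyMeasurable N (ν.restrict (Icc 0 t)) := by
    intro ν
    refine ⟨fun u => if u ∈ Ioc (0:ℝ) T then N u else M 0,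
      hGmeas.stronglyMeasurable, ?_⟩
    rw [Filter.EventuallyEq, ae_restrict_iff' measurableSet_Icc]
    refine Filter.Eventually.of_forall fun u hu => ?_
    rcases eq_or_lt_of_le hu.1 with h0 | h0
    · rw [← h0, if_neg (by simp), ← hM0]
    · rw [if_pos ⟨h0, le_trans hu.2 ht.2⟩]
  -- integrability of N
  have hIntN : ∀ ν : Measure ℝ, [IsFiniteMeasure ν] → IntegrableOn S (Icc 0 t) ν →
      IntegrableOn N (Icc 0 t) ν := by
    intro ν _ hIS
    refine Integrable.mono' (hIS.const_mul (1 + κ - ε)) (hNaesm ν) ?_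
    rw [ae_restrict_iff' measurableSet_Icc]
    refine Filter.Eventually.of_forall fun u hu => ?_
    have h1 := hNS u (hsub hu)
    have h2 := (hSpos u (hsub hu)).le
    rw [Real.norm_eq_abs]
    have := abs_sub_abs_le_abs_sub (N u) (S u)
    rw [abs_of_nonneg h2] at this
    linarith
  have hIntN₁ : IntegrableOn N (Icc 0 t) ν₁ := hIntN ν₁ hIntS₁
  have hIntN₂ : IntegrableOn N (Icc 0 t) ν₂ := hIntN ν₂ hIntS₂
  -- bound on the difference of integrals
  have hdiff : ∀ ν : Measure ℝ, [IsFiniteMeasure ν] → IntegrableOn S (Icc 0 t) ν →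
      IntegrableOn N (Icc 0 t) ν →
      |(∫ u in Icc 0 t, S u ∂ν) - ∫ u in Icc 0 t, N u ∂ν| ≤
        (κ - ε) * ∫ u in Icc 0 t, S u ∂ν := by
    intro ν _ hIS hIN
    rw [← integral_sub hIS hIN]
    calc |∫ u in Icc 0 t, (S u - N u) ∂ν|
        ≤ ∫ u in Icc 0 t, |S u - N u| ∂ν := by
          simpa [Real.norm_eq_abs] using
            norm_integral_le_integral_norm (μ := ν.restrict (Icc 0 t)) (fun u => S u - N u)
      _ ≤ ∫ u in Icc 0 t, (κ - ε) * S u ∂ν := by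
          apply integral_mono_ae (hIS.sub hIN).abs (hIS.const_mul _)
          rw [Filter.EventuallyLE, ae_restrict_iff' measurableSet_Icc]
          refine Filter.Eventually.of_forall fun u hu => ?_
          show |S u - N u| ≤ (κ - ε) * S u
          rw [abs_sub_comm]
          exact hNS u (hsub hu)
      _ = (κ - ε) * ∫ u in Icc 0 t, S u ∂ν := integral_const_mul _ _
  have h2 := hdiff ν₁ hIntS₁ hIntN₁
  have h3 := hdiff ν₂ hIntS₂ hIntN₂
  -- the total variation integral splits
  have hTVsplit : totalVarIntegral S μ t =
      (∫ u in Icc 0 t, S u ∂ν₁) + ∫ u in Icc 0 t, S u ∂ν₂ := by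
    rw [totalVarIntegral]
    have : μ.totalVariation = ν₁ + ν₂ := rfl
    rw [this, Measure.restrict_add, integral_add_measure hIntS₁ hIntS₂]
  -- the admissibility condition expanded
  have hadm' := hadm t ht
  rw [portfolioValue, stieltjesIntegral, hTVsplit] at hadm'
  -- bound on the stock-price term
  have e1 : |μ (Icc 0 t) * (M t - S t)| = |μ (Icc 0 t)| * |M t - S t| := abs_mul _ _
  have e2 : |μ (Icc 0 t)| * |M t - S t| ≤ |μ (Icc 0 t)| * ((κ - ε) * S t) :=
    mul_le_mul_of_nonneg_left (hMS t ht) (abs_nonneg _)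
  have e3 : -|μ (Icc 0 t) * (M t - S t)| ≤ μ (Icc 0 t) * (M t - S t) := neg_abs_le _
  have hnn : (0:ℝ) ≤ ε * (|μ (Icc 0 t)| * S t) :=
    mul_nonneg hε.1.le (mul_nonneg (abs_nonneg _) (hSpos t ht).le)
  have h2' := abs_le.mp h2
  have h3' := abs_le.mp h3
  rw [stieltjesIntegral, hTVsplit]
  nlinarith [h2'.1, h2'.2, h3'.1, h3'.2, e1, e2, e3, hnn, hadm']
end

section
/- Let T > 0. Let S_n, S : [0,T] → ℝ with S continuous and S_n → S uniformly on [0,T]. Let γ_n, γ : [0,T] → ℝ be right-continuous of bounded variation with the convention γ_n(0−) = γ(0−) = 0, such that sup_n Var_{[0,T]}(γ_n) < ∞ and there is a Borel set I ⊆ [0,T] of full Lebesgue measure with γ_n(u) → γ(u) for every u ∈ I. Then for every t ∈ [0,T] with γ_n(t) → γ(t), one has ∫_{[0,t]} S_n(u) dγ_n(u) → ∫_{[0,t]} S(u) dγ(u) as n → ∞. -/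
open MeasureTheory Set Filter

namespace Stmt8Aux

/-- The `i`-th piece of the partition `0 = p 0 ≤ p 1 ≤ ... ≤ p k = t` of `[0,t]`. -/
def part (p : ℕ → ℝ) (i : ℕ) : Set ℝ :=
  if i = 0 then Icc 0 (p 1) else Ioc (p i) (p (i + 1))

lemma part_meas (p : ℕ → ℝ) (i : ℕ) : MeasurableSet (part p i) := by
  unfold part; split
  · exact measurableSet_Icc
  · exact measurableSet_Ioc

lemma signed_apply (μ : SignedMeasure ℝ) {s : Set ℝ} (hs : MeasurableSet s) :
    μ s = (μ.toJordanDecomposition.posPart s).toReal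
        - (μ.toJordanDecomposition.negPart s).toReal := by
  conv_lhs => rw [← μ.toSignedMeasure_toJordanDecomposition]
  rw [MeasureTheory.JordanDecomposition.toSignedMeasure, VectorMeasure.sub_apply,
    Measure.toSignedMeasure_apply_measurable hs, Measure.toSignedMeasure_apply_measurable hs]
  rfl

lemma totalVar_toReal (μ : SignedMeasure ℝ) {s : Set ℝ} :
    (μ.totalVariation s).toReal = (μ.toJordanDecomposition.posPart s).toReal
        + (μ.toJordanDecomposition.negPart s).toReal := by
  rw [MeasureTheory.SignedMeasure.totalVariation, Measure.add_apply,
    ENNReal.toReal_add (measure_ne_top _ _) (measure_ne_top _ _)]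

/-- The basic one–interval estimate. -/
lemma single (ν : Measure ℝ) [IsFiniteMeasure ν] {f : ℝ → ℝ} {s : Set ℝ}
    (hf : IntegrableOn f s ν) {a ε : ℝ}
    (hosc : ∀ x ∈ s, |f x - f a| ≤ ε) :
    |(∫ u in s, f u ∂ν) - f a * (ν s).toReal| ≤ ε * (ν s).toReal := by
  have hconst : IntegrableOn (fun _ : ℝ => f a) s ν :=
    integrableOn_const (measure_ne_top _ _)
  have h1 : (∫ u in s, f u ∂ν) - f a * (ν s).toReal = ∫ u in s, (f u - f a) ∂ν := by
    rw [integral_sub hf hconst, setIntegral_const, smul_eq_mul, mul_comm]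
    rfl
  rw [h1]
  have := norm_setIntegral_le_of_norm_le_const (μ := ν) (s := s) (C := ε)
    (f := fun u => f u - f a) (measure_lt_top _ _)
    (fun x hx => by simpa using hosc x hx)
  simpa [Measure.real] using this

/-- The partition estimate for a (nonnegative) finite measure. -/
lemma estimate (ν : Measure ℝ) [IsFiniteMeasure ν] (f : ℝ → ℝ) (p : ℕ → ℝ)
    (hp : Monotone p) (hp0 : p 0 = 0) {ε : ℝ} :
    ∀ k, 1 ≤ k → IntegrableOn f (Icc 0 (p k)) ν →
    (∀ i < k, ∀ x ∈ Icc (p i) (p (i + 1)), |f x - f (p (i + 1))| ≤ ε) →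
    |(∫ u in Icc 0 (p k), f u ∂ν) -
        ∑ i ∈ Finset.range k, f (p (i + 1)) * (ν (part p i)).toReal|
      ≤ ε * (ν (Icc 0 (p k))).toReal := by
  refine Nat.le_induction ?_ ?_
  · intro hf hosc
    have h0 : part p 0 = Icc 0 (p 1) := by simp [part]
    rw [Finset.sum_range_one, h0]
    have := single ν hf (a := p 1) (ε := ε) (fun x hx => by
      refine hosc 0 one_pos x ?_
      rwa [hp0])
    exact this
  · intro k hk IH hf hosc
    have h0pk : (0 : ℝ) ≤ p k := by rw [← hp0]; exact hp (Nat.zero_le _)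
    have hkk1 : p k ≤ p (k + 1) := hp (Nat.le_succ _)
    have hunion : Icc 0 (p k) ∪ Ioc (p k) (p (k + 1)) = Icc 0 (p (k + 1)) :=
      Icc_union_Ioc_eq_Icc h0pk hkk1
    have hdisj : Disjoint (Icc 0 (p k)) (Ioc (p k) (p (k + 1))) := by
      refine Set.disjoint_left.2 fun x hx hx' => absurd hx.2 (not_le.2 hx'.1)
    have hi1 : IntegrableOn f (Icc 0 (p k)) ν :=
      hf.mono_set (hunion ▸ Set.subset_union_left)
    have hi2 : IntegrableOn f (Ioc (p k) (p (k + 1))) ν :=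
      hf.mono_set (hunion ▸ Set.subset_union_right)
    have hsplit : (∫ u in Icc 0 (p (k + 1)), f u ∂ν)
        = (∫ u in Icc 0 (p k), f u ∂ν) + ∫ u in Ioc (p k) (p (k + 1)), f u ∂ν := by
      rw [← hunion, setIntegral_union hdisj measurableSet_Ioc hi1 hi2]
    have hmeas : (ν (Icc 0 (p (k + 1)))).toReal
        = (ν (Icc 0 (p k))).toReal + (ν (Ioc (p k) (p (k + 1)))).toReal := by
      rw [← hunion, measure_union hdisj measurableSet_Ioc,
        ENNReal.toReal_add (measure_ne_top _ _) (measure_ne_top _ _)]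
    have hpartk : part p k = Ioc (p k) (p (k + 1)) := by
      have : k ≠ 0 := by omega
      simp [part, this]
    have hIH := IH hi1 (fun i hi => hosc i (by omega))
    have hlast := single ν hi2 (a := p (k + 1)) (ε := ε) (fun x hx =>
      hosc k (by omega) x (Set.Ioc_subset_Icc_self hx))
    rw [hsplit, Finset.sum_range_succ, hpartk, hmeas, mul_add]
    have habs : (∫ u in Icc 0 (p k), f u ∂ν) + (∫ u in Ioc (p k) (p (k + 1)), f u ∂ν)
        - (∑ i ∈ Finset.range k, f (p (i + 1)) * (ν (part p i)).toReal
            + f (p (k + 1)) * (ν (Ioc (p k) (p (k + 1)))).toReal)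
        = ((∫ u in Icc 0 (p k), f u ∂ν)
            - ∑ i ∈ Finset.range k, f (p (i + 1)) * (ν (part p i)).toReal)
          + ((∫ u in Ioc (p k) (p (k + 1)), f u ∂ν)
            - f (p (k + 1)) * (ν (Ioc (p k) (p (k + 1)))).toReal) := by ring
    rw [habs]
    exact (abs_add_le _ _).trans (add_le_add hIH hlast)

/-- The partition estimate for a signed measure. -/
lemma signed_estimate (μ : SignedMeasure ℝ) (f : ℝ → ℝ) (p : ℕ → ℝ)
    (hp : Monotone p) (hp0 : p 0 = 0) {ε : ℝ} (k : ℕ) (hk : 1 ≤ k)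
    (hfc : ContinuousOn f (Icc 0 (p k)))
    (hosc : ∀ i < k, ∀ x ∈ Icc (p i) (p (i + 1)), |f x - f (p (i + 1))| ≤ ε) :
    |stieltjesIntegral f μ (p k) -
        ∑ i ∈ Finset.range k, f (p (i + 1)) * μ (part p i)|
      ≤ ε * (μ.totalVariation (Icc 0 (p k))).toReal := by
  set νp := μ.toJordanDecomposition.posPart with hνp
  set νn := μ.toJordanDecomposition.negPart with hνn
  have hfp : IntegrableOn f (Icc 0 (p k)) νp := hfc.integrableOn_Icc
  have hfn : IntegrableOn f (Icc 0 (p k)) νn := hfc.integrableOn_Icc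
  have hep := estimate νp f p hp hp0 k hk hfp hosc
  have hen := estimate νn f p hp hp0 k hk hfn hosc
  have hsum : ∑ i ∈ Finset.range k, f (p (i + 1)) * μ (part p i)
      = (∑ i ∈ Finset.range k, f (p (i + 1)) * (νp (part p i)).toReal)
        - ∑ i ∈ Finset.range k, f (p (i + 1)) * (νn (part p i)).toReal := by
    rw [← Finset.sum_sub_distrib]
    refine Finset.sum_congr rfl fun i _ => ?_
    rw [signed_apply μ (part_meas p i)]; ring
  rw [stieltjesIntegral, hsum, totalVar_toReal, mul_add]
  have habs : (∫ u in Icc 0 (p k), f u ∂νp) - (∫ u in Icc 0 (p k), f u ∂νn)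
      - ((∑ i ∈ Finset.range k, f (p (i + 1)) * (νp (part p i)).toReal)
        - ∑ i ∈ Finset.range k, f (p (i + 1)) * (νn (part p i)).toReal)
      = ((∫ u in Icc 0 (p k), f u ∂νp)
          - ∑ i ∈ Finset.range k, f (p (i + 1)) * (νp (part p i)).toReal)
        - ((∫ u in Icc 0 (p k), f u ∂νn)
          - ∑ i ∈ Finset.range k, f (p (i + 1)) * (νn (part p i)).toReal) := by ring
  rw [habs]
  exact (abs_sub _ _).trans (add_le_add hep hen)

/-- Comparison of the Stieltjes integrals of two uniformly close functions. -/
lemma diff_estimate (μ : SignedMeasure ℝ) {f g : ℝ → ℝ} {t : ℝ}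
    (hf : ContinuousOn f (Icc 0 t)) (hg : ContinuousOn g (Icc 0 t)) {η : ℝ}
    (hη : ∀ x ∈ Icc 0 t, |f x - g x| ≤ η) :
    |stieltjesIntegral f μ t - stieltjesIntegral g μ t|
      ≤ η * (μ.totalVariation (Icc 0 t)).toReal := by
  set νp := μ.toJordanDecomposition.posPart with hνp
  set νn := μ.toJordanDecomposition.negPart with hνn
  have hfp : IntegrableOn f (Icc 0 t) νp := hf.integrableOn_Icc
  have hfn : IntegrableOn f (Icc 0 t) νn := hf.integrableOn_Icc
  have hgp : IntegrableOn g (Icc 0 t) νp := hg.integrableOn_Icc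
  have hgn : IntegrableOn g (Icc 0 t) νn := hg.integrableOn_Icc
  have hbp : |(∫ u in Icc 0 t, f u ∂νp) - ∫ u in Icc 0 t, g u ∂νp|
      ≤ η * (νp (Icc 0 t)).toReal := by
    rw [← integral_sub hfp hgp]
    have := norm_setIntegral_le_of_norm_le_const (μ := νp) (s := Icc 0 t) (C := η)
      (f := fun u => f u - g u) (measure_lt_top _ _)
      (fun x hx => by simpa using hη x hx)
    simpa [Measure.real] using this
  have hbn : |(∫ u in Icc 0 t, f u ∂νn) - ∫ u in Icc 0 t, g u ∂νn|
      ≤ η * (νn (Icc 0 t)).toReal := by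
    rw [← integral_sub hfn hgn]
    have := norm_setIntegral_le_of_norm_le_const (μ := νn) (s := Icc 0 t) (C := η)
      (f := fun u => f u - g u) (measure_lt_top _ _)
      (fun x hx => by simpa using hη x hx)
    simpa [Measure.real] using this
  rw [totalVar_toReal, mul_add]
  have habs : stieltjesIntegral f μ t - stieltjesIntegral g μ t
      = ((∫ u in Icc 0 t, f u ∂νp) - ∫ u in Icc 0 t, g u ∂νp)
        - ((∫ u in Icc 0 t, f u ∂νn) - ∫ u in Icc 0 t, g u ∂νn) := by
    rw [stieltjesIntegral, stieltjesIntegral]; ring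
  rw [habs]
  exact (abs_sub _ _).trans (add_le_add hbp hbn)


/-- Existence of a fine partition of `[0,t]` with interior points in `I`. -/
lemma exists_partition (T : ℝ) (I : Set ℝ)
    (hIfull : volume (Icc (0:ℝ) T \ I) = 0) (t : ℝ) (ht : t ∈ Icc 0 T)
    (δ : ℝ) (hδ : 0 < δ) :
    ∃ (k : ℕ) (p : ℕ → ℝ), 1 ≤ k ∧ Monotone p ∧ p 0 = 0 ∧ (∀ i, k ≤ i → p i = t) ∧
      (∀ i, 0 < i → i < k → p i ∈ I) ∧ (∀ i, p i ∈ Icc 0 t) ∧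
      (∀ i, p (i + 1) - p i < δ) := by
  classical
  obtain ⟨ht0, htT⟩ := ht
  set k : ℕ := ⌈2 * t / δ⌉₊ + 1 with hk
  set h : ℝ := t / k with hh
  have hk1 : 1 ≤ k := by omega
  have hkpos : (0:ℝ) < k := by positivity
  have hh0 : 0 ≤ h := by positivity
  have hceil : 2 * t / δ ≤ (k : ℝ) := by
    rw [hk]; push_cast; linarith [Nat.le_ceil (2 * t / δ)]
  have hhδ : h ≤ δ / 2 := by
    rw [hh, div_le_div_iff₀ hkpos two_pos]
    have h2t : 2 * t ≤ (k:ℝ) * δ := by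
      rw [div_le_iff₀ hδ] at hceil; linarith
    linarith
  have hkh : (k : ℝ) * h = t := by
    rw [hh]; field_simp
  have hsel : ∀ i : ℕ, 0 < i → i < k →
      (I ∩ Ioo ((i:ℝ) * h - h / 2) ((i:ℝ) * h)).Nonempty := by
    intro i hi hik
    have hi1 : (1:ℝ) ≤ (i:ℝ) := by exact_mod_cast hi
    have hik' : (i:ℝ) ≤ (k:ℝ) := by exact_mod_cast hik.le
    have hhpos : 0 < h := by
      rcases hh0.lt_or_eq with h' | h'
      · exact h'
      · exfalso
        have ht0' : t = 0 := by rw [← hkh, ← h']; ring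
        have : ⌈2 * t / δ⌉₊ = 0 := by rw [ht0']; simp
        omega
    by_contra hemp
    rw [Set.not_nonempty_iff_eq_empty] at hemp
    have hsub : Ioo ((i:ℝ) * h - h / 2) ((i:ℝ) * h) ⊆ Icc (0:ℝ) T \ I := by
      intro x hx
      have hx1 : (0:ℝ) ≤ x := by nlinarith [hx.1]
      have hx2 : x ≤ T := by nlinarith [hx.2]
      refine ⟨⟨hx1, hx2⟩, fun hxI => ?_⟩
      have : x ∈ I ∩ Ioo ((i:ℝ) * h - h / 2) ((i:ℝ) * h) := ⟨hxI, hx⟩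
      rw [hemp] at this; exact this
    have hvol : volume (Ioo ((i:ℝ) * h - h / 2) ((i:ℝ) * h)) = 0 :=
      le_antisymm (hIfull ▸ measure_mono hsub) zero_le
    rw [Real.volume_Ioo] at hvol
    have he : ((i:ℝ) * h) - ((i:ℝ) * h - h / 2) = h / 2 := by ring
    rw [he] at hvol
    have := ENNReal.ofReal_eq_zero.1 hvol
    linarith
  set q : ℕ → ℝ := fun i =>
    if hi : 0 < i ∧ i < k then (hsel i hi.1 hi.2).choose else 0 with hqdef
  have hq : ∀ i, 0 < i → i < k →
      q i ∈ I ∧ (i:ℝ) * h - h / 2 < q i ∧ q i < (i:ℝ) * h := by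
    intro i h1 h2
    have : q i = (hsel i h1 h2).choose := by rw [hqdef]; simp [h1, h2]
    rw [this]
    obtain ⟨hI, hlo, hhi⟩ := (hsel i h1 h2).choose_spec
    exact ⟨hI, hlo, hhi⟩
  set p : ℕ → ℝ := fun i => if i = 0 then 0 else if i < k then q i else t with hpdef
  have hp0 : p 0 = 0 := by simp [hpdef]
  have hpt : ∀ i, k ≤ i → p i = t := by
    intro i hi
    have h1 : i ≠ 0 := by omega
    have h2 : ¬ i < k := by omega
    simp [hpdef, h1, h2]
  have hpq : ∀ i, 0 < i → i < k → p i = q i := by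
    intro i h1 h2
    have h1' : i ≠ 0 := by omega
    simp [hpdef, h1', h2]
  have hpbound : ∀ i, 0 < i → i < k →
      (i:ℝ) * h - h / 2 < p i ∧ p i < (i:ℝ) * h := by
    intro i h1 h2; rw [hpq i h1 h2]; exact ⟨(hq i h1 h2).2.1, (hq i h1 h2).2.2⟩
  have hmem : ∀ i, p i ∈ Icc 0 t := by
    intro i
    rcases Nat.eq_zero_or_pos i with h0 | h0
    · subst h0; rw [hp0]; exact ⟨le_refl 0, ht0⟩
    rcases lt_or_ge i k with hik | hik
    · obtain ⟨hlo, hhi⟩ := hpbound i h0 hik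
      have hi1 : (1:ℝ) ≤ (i:ℝ) := by exact_mod_cast h0
      have hik' : (i:ℝ) ≤ (k:ℝ) := by exact_mod_cast hik.le
      constructor
      · nlinarith
      · nlinarith
    · rw [hpt i hik]; exact ⟨ht0, le_refl t⟩
  have hmono : Monotone p := by
    apply monotone_nat_of_le_succ
    intro i
    rcases Nat.eq_zero_or_pos i with h0 | h0
    · subst h0; rw [hp0]; exact (hmem 1).1
    rcases lt_or_ge (i+1) k with hik1 | hik1
    · have hik : i < k := by omega
      obtain ⟨_, hhi⟩ := hpbound i h0 hik
      obtain ⟨hlo1, _⟩ := hpbound (i+1) (by omega) hik1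
      push_cast at hlo1
      nlinarith
    · rcases lt_or_ge i k with hik | hik
      · rw [hpt (i+1) hik1]
        exact (hmem i).2
      · rw [hpt i hik, hpt (i+1) (by omega)]
  have hmesh : ∀ i, p (i + 1) - p i < δ := by
    intro i
    rcases Nat.eq_zero_or_pos i with h0 | h0
    · subst h0
      rw [hp0]
      rcases lt_or_ge 1 k with hk2 | hk2
      · obtain ⟨_, hhi⟩ := hpbound 1 one_pos hk2
        push_cast at hhi
        linarith
      · have hkk : k = 1 := by omega
        rw [hpt 1 (by omega)]
        have : t = h := by rw [← hkh, hkk]; push_cast; ring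
        linarith
    rcases lt_or_ge i k with hik | hik
    · obtain ⟨hlo, _⟩ := hpbound i h0 hik
      rcases lt_or_ge (i+1) k with hik1 | hik1
      · obtain ⟨_, hhi1⟩ := hpbound (i+1) (by omega) hik1
        push_cast at hhi1
        linarith
      · have hkk : k = i + 1 := by omega
        rw [hpt (i+1) hik1]
        have hteq : t = ((i:ℝ) + 1) * h := by
          rw [← hkh, hkk]; push_cast; ring
        linarith
    · rw [hpt i hik, hpt (i+1) (by omega)]
      simp [hδ]
  exact ⟨k, p, hk1, hmono, hp0, hpt, fun i h1 h2 => (hpq i h1 h2) ▸ (hq i h1 h2).1,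
    hmem, hmesh⟩

end Stmt8Aux

/-- Convergence of Stieltjes integrals (equation (4.11) of the paper): if `S_n → S` uniformly
on `[0,T]` with `S` continuous, the strategies `γ_n` (encoded by signed measures `μ_n`,
`γ_n(u) = μ_n([0,u])`) have uniformly bounded total variation and converge pointwise to `γ`
on a set of full Lebesgue measure, then `∫_{[0,t]} S_n dγ_n → ∫_{[0,t]} S dγ` at every time
`t ∈ [0,T]` at which `γ_n(t) → γ(t)`. -/
theorem stmt_8 (T : ℝ) (hT : 0 < T) (S : ℕ → ℝ → ℝ) (S₀ : ℝ → ℝ)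
    (hS₀ : ContinuousOn S₀ (Icc 0 T)) (hSn : ∀ n, ContinuousOn (S n) (Icc 0 T))
    (hunif : TendstoUniformlyOn S S₀ Filter.atTop (Icc 0 T))
    (μ : ℕ → SignedMeasure ℝ) (μ₀ : SignedMeasure ℝ)
    (c : ℝ) (hvar : ∀ n, (μ n).totalVariation (Icc 0 T) ≤ ENNReal.ofReal c)
    (I : Set ℝ) (hImeas : MeasurableSet I) (hIsub : I ⊆ Icc 0 T)
    (hIfull : volume (Icc (0:ℝ) T \ I) = 0)
    (hconv : ∀ u ∈ I, Filter.Tendsto (fun n => (μ n) (Icc 0 u)) Filter.atTop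
      (nhds (μ₀ (Icc 0 u)))) :
    ∀ t ∈ Icc (0:ℝ) T,
      Filter.Tendsto (fun n => (μ n) (Icc 0 t)) Filter.atTop (nhds (μ₀ (Icc 0 t))) →
      Filter.Tendsto (fun n => stieltjesIntegral (S n) (μ n) t) Filter.atTop
        (nhds (stieltjesIntegral S₀ μ₀ t)) := by
  intro t ht hμt
  rw [Metric.tendsto_nhds]
  intro ε hε
  set c' : ℝ := max c 0 with hc'
  have hc'0 : 0 ≤ c' := le_max_right _ _
  have hvar' : ∀ n, ((μ n).totalVariation (Icc 0 t)).toReal ≤ c' := by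
    intro n
    apply ENNReal.toReal_le_of_le_ofReal hc'0
    calc (μ n).totalVariation (Icc 0 t) ≤ (μ n).totalVariation (Icc 0 T) :=
          measure_mono (Icc_subset_Icc_right ht.2)
      _ ≤ ENNReal.ofReal c := hvar n
      _ ≤ ENNReal.ofReal c' := ENNReal.ofReal_le_ofReal (le_max_left _ _)
  set V : ℝ := (μ₀.totalVariation (Icc 0 t)).toReal with hV
  have hV0 : 0 ≤ V := ENNReal.toReal_nonneg
  set D : ℝ := 2 * c' + V + 1 with hD
  have hD0 : 0 < D := by positivity
  set ε' : ℝ := ε / (4 * D) with hε'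
  have hε'0 : 0 < ε' := by positivity
  obtain ⟨δ, hδ0, hδ⟩ := Metric.uniformContinuousOn_iff.1
    (isCompact_Icc.uniformContinuousOn_of_continuous hS₀) ε' hε'0
  obtain ⟨k, p, hk1, hmono, hp0, hpt, hpI, hpmem, hmesh⟩ :=
    Stmt8Aux.exists_partition T I hIfull t ht δ hδ0
  have hpk : p k = t := hpt k le_rfl
  have hpmemT : ∀ i, p i ∈ Icc 0 T := fun i => ⟨(hpmem i).1, (hpmem i).2.trans ht.2⟩
  have hS₀t : ContinuousOn S₀ (Icc 0 t) := hS₀.mono (Icc_subset_Icc_right ht.2)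
  have hosc : ∀ i < k, ∀ x ∈ Icc (p i) (p (i + 1)), |S₀ x - S₀ (p (i + 1))| ≤ ε' := by
    intro i hi x hx
    have hxT : x ∈ Icc 0 T :=
      ⟨(hpmem i).1.trans hx.1, hx.2.trans ((hpmem (i + 1)).2.trans ht.2)⟩
    have hdist : dist x (p (i + 1)) < δ := by
      rw [Real.dist_eq, abs_sub_comm, abs_of_nonneg (by linarith [hx.2])]
      linarith [hmesh i, hx.1]
    have := hδ x hxT (p (i + 1)) (hpmemT (i + 1)) hdist
    rw [Real.dist_eq] at this
    exact this.le
  have hP : ∀ j, 1 ≤ j →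
      Filter.Tendsto (fun n => (μ n) (Icc 0 (p j))) Filter.atTop (nhds (μ₀ (Icc 0 (p j)))) := by
    intro j hj
    rcases lt_or_ge j k with hjk | hjk
    · exact hconv _ (hpI j hj hjk)
    · rw [hpt j hjk]; exact hμt
  have hpart_val : ∀ (μ' : SignedMeasure ℝ) (i : ℕ), 0 < i →
      μ' (Stmt8Aux.part p i) = μ' (Icc 0 (p (i + 1))) - μ' (Icc 0 (p i)) := by
    intro μ' i hi
    have hun : Icc 0 (p i) ∪ Ioc (p i) (p (i + 1)) = Icc 0 (p (i + 1)) :=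
      Icc_union_Ioc_eq_Icc (hp0 ▸ hmono (Nat.zero_le i)) (hmono (Nat.le_succ i))
    have hdisj : Disjoint (Icc 0 (p i)) (Ioc (p i) (p (i + 1))) :=
      Set.disjoint_left.2 fun x hx hx' => absurd hx.2 (not_le.2 hx'.1)
    have hadd := VectorMeasure.of_union (v := μ') hdisj measurableSet_Icc measurableSet_Ioc
    rw [hun] at hadd
    have hne : i ≠ 0 := by omega
    rw [Stmt8Aux.part, if_neg hne]
    linarith
  have hsum : Filter.Tendsto
      (fun n => ∑ i ∈ Finset.range k, S₀ (p (i + 1)) * (μ n) (Stmt8Aux.part p i))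
      Filter.atTop (nhds (∑ i ∈ Finset.range k, S₀ (p (i + 1)) * μ₀ (Stmt8Aux.part p i))) := by
    apply tendsto_finset_sum
    intro i hi
    rcases Nat.eq_zero_or_pos i with h0 | h0
    · subst h0
      have he : ∀ μ' : SignedMeasure ℝ, μ' (Stmt8Aux.part p 0) = μ' (Icc 0 (p 1)) := by
        intro μ'; rw [Stmt8Aux.part, if_pos rfl]
      simp_rw [he]
      exact (hP 1 le_rfl).const_mul _
    · have he : ∀ μ' : SignedMeasure ℝ,
          μ' (Stmt8Aux.part p i) = μ' (Icc 0 (p (i + 1))) - μ' (Icc 0 (p i)) :=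
        fun μ' => hpart_val μ' i h0
      simp_rw [he]
      exact ((hP (i + 1) (by omega)).sub (hP i h0)).const_mul _
  have hsum' := Metric.tendsto_nhds.1 hsum (ε / 4) (by linarith)
  have hu := Metric.tendstoUniformlyOn_iff.1 hunif ε' hε'0
  filter_upwards [hsum', hu] with n hn1 hn2
  rw [Real.dist_eq] at hn1 ⊢
  have hSnt : ContinuousOn (S n) (Icc 0 t) := (hSn n).mono (Icc_subset_Icc_right ht.2)
  have e1 : |stieltjesIntegral (S n) (μ n) t - stieltjesIntegral S₀ (μ n) t| ≤ ε' * c' := by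
    have := Stmt8Aux.diff_estimate (μ n) hSnt hS₀t (η := ε') (fun x hx => by
      have := hn2 x ⟨hx.1, hx.2.trans ht.2⟩
      rw [Real.dist_eq] at this
      rw [abs_sub_comm]
      exact this.le)
    exact this.trans (mul_le_mul_of_nonneg_left (hvar' n) hε'0.le)
  have e2 : |stieltjesIntegral S₀ (μ n) t -
      ∑ i ∈ Finset.range k, S₀ (p (i + 1)) * (μ n) (Stmt8Aux.part p i)| ≤ ε' * c' := by
    have := Stmt8Aux.signed_estimate (μ n) S₀ p hmono hp0 k hk1 (hpk ▸ hS₀t) hosc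
    rw [hpk] at this
    exact this.trans (mul_le_mul_of_nonneg_left (hvar' n) hε'0.le)
  have e4 : |(∑ i ∈ Finset.range k, S₀ (p (i + 1)) * μ₀ (Stmt8Aux.part p i)) -
      stieltjesIntegral S₀ μ₀ t| ≤ ε' * V := by
    have := Stmt8Aux.signed_estimate μ₀ S₀ p hmono hp0 k hk1 (hpk ▸ hS₀t) hosc
    rw [hpk] at this
    rw [abs_sub_comm]
    exact this
  have habs : stieltjesIntegral (S n) (μ n) t - stieltjesIntegral S₀ μ₀ t
      = (stieltjesIntegral (S n) (μ n) t - stieltjesIntegral S₀ (μ n) t)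
        + (stieltjesIntegral S₀ (μ n) t -
            ∑ i ∈ Finset.range k, S₀ (p (i + 1)) * (μ n) (Stmt8Aux.part p i))
        + ((∑ i ∈ Finset.range k, S₀ (p (i + 1)) * (μ n) (Stmt8Aux.part p i)) -
            ∑ i ∈ Finset.range k, S₀ (p (i + 1)) * μ₀ (Stmt8Aux.part p i))
        + ((∑ i ∈ Finset.range k, S₀ (p (i + 1)) * μ₀ (Stmt8Aux.part p i)) -
            stieltjesIntegral S₀ μ₀ t) := by ring
  have emul : ε' * (2 * c' + V) < ε / 4 := by
    have h1 : ε' * (2 * c' + V) < ε' * D := by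
      apply mul_lt_mul_of_pos_left _ hε'0
      rw [hD]; linarith
    have h2 : ε' * D = ε / 4 := by
      rw [hε']; field_simp
    linarith
  calc |stieltjesIntegral (S n) (μ n) t - stieltjesIntegral S₀ μ₀ t|
      ≤ |stieltjesIntegral (S n) (μ n) t - stieltjesIntegral S₀ (μ n) t|
        + |stieltjesIntegral S₀ (μ n) t -
            ∑ i ∈ Finset.range k, S₀ (p (i + 1)) * (μ n) (Stmt8Aux.part p i)|
        + |(∑ i ∈ Finset.range k, S₀ (p (i + 1)) * (μ n) (Stmt8Aux.part p i)) -
            ∑ i ∈ Finset.range k, S₀ (p (i + 1)) * μ₀ (Stmt8Aux.part p i)|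
        + |(∑ i ∈ Finset.range k, S₀ (p (i + 1)) * μ₀ (Stmt8Aux.part p i)) -
            stieltjesIntegral S₀ μ₀ t| := by
        rw [habs]
        exact (abs_add_le _ _).trans (add_le_add ((abs_add_le _ _).trans
          (add_le_add (abs_add_le _ _) le_rfl)) le_rfl)
    _ < ε := by nlinarith [e1, e2, hn1, e4, emul]
end

section
/- Let T > 0, κ ∈ (0,1), let S : [0,T] → (0,∞) be continuous, and let γ : [0,T] → ℝ be right-continuous of bounded variation with γ_{0−} = 0 and γ_T = 0. For n ∈ ℕ define the discretized strategy γ̄^n by γ̄^n_t := Σ_{i=1}^{n−1} γ_{(i−1)T/n} · 1_{[iT/n, (i+1)T/n)}(t) for t ∈ [0,T) and γ̄^n_T := 0. Then V^γ_T ≤ liminf_{n→∞} V^{γ̄^n}_T, i.e. −∫_{[0,T]} S dγ − κ∫_{[0,T]} S |dγ| ≤ liminf_{n→∞} ( −∫_{[0,T]} S dγ̄^n − κ∫_{[0,T]} S |dγ̄^n| ). -/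
open MeasureTheory Set

/-- The value of the discretized strategy `γ̄^n` on the grid cell `[iT/n, (i+1)T/n)`:
`γ̄^n = Σ_{i=1}^{n−1} γ_{(i−1)T/n} 1_{[iT/n,(i+1)T/n)}`, together with `γ̄^n_T = 0` and
`γ̄^n = 0` on `[0, T/n)`. -/
noncomputable def bval (T : ℝ) (γ : ℝ → ℝ) (n i : ℕ) : ℝ :=
  if i = 0 ∨ n ≤ i then 0 else γ (((i : ℝ) - 1) * T / n)

/-- The terminal portfolio value `V^{γ̄^n}_T = −∫_{[0,T]} S dγ̄^n − κ ∫_{[0,T]} S |dγ̄^n|` of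
the piecewise-constant strategy `γ̄^n`, whose Lebesgue–Stieltjes measure is the sum of the
point masses `(bval(i+1) − bval(i)) δ_{(i+1)T/n}`, `i = 0, …, n−1`. -/
noncomputable def discreteTerminalValue (T κ : ℝ) (S γ : ℝ → ℝ) (n : ℕ) : ℝ :=
  -(∑ i ∈ Finset.range n, S (((i : ℝ) + 1) * T / n) * (bval T γ n (i + 1) - bval T γ n i))
    - κ * ∑ i ∈ Finset.range n,
        S (((i : ℝ) + 1) * T / n) * |bval T γ n (i + 1) - bval T γ n i|

namespace Stmt10Aux

noncomputable def bpt (T : ℝ) (n i : ℕ) : ℝ :=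
  if i = 0 then 0 else if n ≤ i then T else ((i : ℝ) - 1) * T / n

noncomputable def cell (T : ℝ) (n i : ℕ) : Set ℝ :=
  if i = 0 then Icc 0 0 else Ioc (bpt T n i) (bpt T n (i + 1))

noncomputable def cum (T : ℝ) (n : ℕ) (φ : Set ℝ → ℝ) (j : ℕ) : ℝ :=
  if j = 0 then 0 else φ (Icc 0 (bpt T n j))

variable {T : ℝ} {n : ℕ}

lemma bpt_nonneg (hT : 0 < T) (i : ℕ) : 0 ≤ bpt T n i := by
  unfold bpt
  split_ifs with h1 h2
  · exact le_rfl
  · exact hT.le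
  · have hn : (0:ℝ) < n := by exact_mod_cast (by omega : 0 < n)
    have h1' : (1:ℝ) ≤ (i:ℝ) := by exact_mod_cast Nat.one_le_iff_ne_zero.2 h1
    have : (0:ℝ) ≤ (i:ℝ) - 1 := by linarith
    positivity

lemma bpt_le (hT : 0 < T) (i : ℕ) : bpt T n i ≤ T := by
  unfold bpt
  split_ifs with h1 h2
  · exact hT.le
  · exact le_rfl
  · have hin : i < n := by omega
    have hn : (0:ℝ) < n := by exact_mod_cast (by omega : 0 < n)
    rw [div_le_iff₀ hn]
    have : (i:ℝ) ≤ n := by exact_mod_cast hin.le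
    nlinarith

lemma bpt_mono (hT : 0 < T) (i : ℕ) : bpt T n i ≤ bpt T n (i + 1) := by
  rcases eq_or_ne i 0 with h | h
  · subst h
    simpa [bpt] using bpt_nonneg (n := n) hT 1
  · by_cases hni : n ≤ i
    · rw [bpt, bpt, if_neg h, if_neg (show ¬(i + 1 = 0) by omega),
        if_pos hni, if_pos (show n ≤ i + 1 by omega)]
    · have hbi : bpt T n i = ((i:ℝ) - 1) * T / n := by rw [bpt, if_neg h, if_neg hni]
      rw [hbi]
      by_cases hni1 : n ≤ i + 1
      · have h2 := bpt_le (n := n) hT i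
        rw [hbi] at h2
        rw [bpt, if_neg (show ¬(i + 1 = 0) by omega), if_pos hni1]
        exact h2
      · rw [bpt, if_neg (show ¬(i + 1 = 0) by omega), if_neg hni1]
        have hn : (0:ℝ) < n := by exact_mod_cast (by omega : 0 < n)
        push_cast
        rw [div_le_div_iff₀ hn hn]
        nlinarith

lemma bpt_eq_T {i : ℕ} (h : n ≤ i) (hn : 1 ≤ n) : bpt T n i = T := by
  rw [bpt, if_neg (show ¬(i = 0) by omega), if_pos h]

lemma bpt_one (hn : 2 ≤ n) : bpt T n 1 = 0 := by
  rw [bpt, if_neg one_ne_zero, if_neg (show ¬(n ≤ 1) by omega)]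
  norm_num

lemma cell_subset (hT : 0 < T) (i : ℕ) : cell T n i ⊆ Icc 0 T := by
  rw [cell]
  split_ifs with h
  · exact Icc_subset_Icc le_rfl hT.le
  · intro u hu
    exact ⟨(bpt_nonneg hT _).trans hu.1.le, hu.2.trans (bpt_le hT _)⟩

lemma cell_measurable (i : ℕ) : MeasurableSet (cell T n i) := by
  rw [cell]; split_ifs <;> [exact measurableSet_Icc; exact measurableSet_Ioc]

lemma cell_dist (hT : 0 < T) {i : ℕ} (hi : i < n) {u : ℝ} (hu : u ∈ cell T n i) :
    |u - ((i : ℝ) + 1) * T / n| ≤ 2 * T / n := by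
  have hn : (0:ℝ) < n := by exact_mod_cast (by omega : 0 < n)
  have hTn : 0 < T / n := div_pos hT hn
  have h2 : 2 * T / (n:ℝ) = 2 * (T / n) := by ring
  rw [abs_le]
  rcases eq_or_ne i 0 with h0 | h0
  · subst h0
    have hu0 : u = 0 := by simpa [cell] using hu
    subst hu0
    have e1 : 0 - (((0:ℕ):ℝ) + 1) * T / n = -(T / n) := by push_cast; ring
    rw [e1, h2]
    constructor <;> linarith
  · rw [cell, if_neg h0] at hu
    obtain ⟨hu1, hu2⟩ := hu
    have hbi : bpt T n i = ((i:ℝ) - 1) * T / n := by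
      rw [bpt, if_neg h0, if_neg (show ¬(n ≤ i) by omega)]
    have hb2 : bpt T n (i + 1) ≤ ((i:ℝ) + 1) * T / n := by
      rw [bpt, if_neg (show ¬(i + 1 = 0) by omega)]
      split_ifs with h
      · rw [le_div_iff₀ hn]
        have : (n:ℝ) ≤ (i:ℝ) + 1 := by exact_mod_cast h
        nlinarith
      · push_cast
        rw [div_le_div_iff₀ hn hn]
        nlinarith
    rw [hbi] at hu1
    have key : ((i:ℝ) - 1) * T / n = ((i:ℝ) + 1) * T / n - 2 * T / n := by ring
    have := hu2.trans hb2
    constructor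
    · linarith
    · rw [h2]; linarith

lemma cell_content (hT : 0 < T) (hn : 2 ≤ n) (φ : Set ℝ → ℝ)
    (hadd : ∀ x y : ℝ, 0 ≤ x → x ≤ y → y ≤ T →
      φ (Icc 0 y) = φ (Icc 0 x) + φ (Ioc x y)) (i : ℕ) :
    φ (cell T n i) = cum T n φ (i + 1) - cum T n φ i := by
  rcases eq_or_ne i 0 with h0 | h0
  · subst h0
    rw [cum, cum, if_neg (show ¬(0 + 1 = 0) by omega), if_pos rfl, cell, if_pos rfl,
      show (0 + 1 : ℕ) = 1 from rfl, bpt_one hn, sub_zero]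
  · rw [cum, cum, if_neg (show ¬(i + 1 = 0) by omega), if_neg h0, cell, if_neg h0]
    have := hadd (bpt T n i) (bpt T n (i + 1)) (bpt_nonneg hT _) (bpt_mono hT _) (bpt_le hT _)
    linarith

lemma cell_sum (hT : 0 < T) (hn : 2 ≤ n) (φ : Set ℝ → ℝ)
    (hadd : ∀ x y : ℝ, 0 ≤ x → x ≤ y → y ≤ T →
      φ (Icc 0 y) = φ (Icc 0 x) + φ (Ioc x y)) :
    ∑ i ∈ Finset.range n, φ (cell T n i) = φ (Icc 0 T) := by
  rw [Finset.sum_congr rfl (fun i _ => cell_content hT hn φ hadd i),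
    Finset.sum_range_sub (cum T n φ) n, cum, cum, if_neg (show ¬(n = 0) by omega),
    if_pos rfl, bpt_eq_T le_rfl (by omega), sub_zero]

lemma disj_Icc_Ioc (x y : ℝ) : Disjoint (Icc 0 x) (Ioc x y) := by
  rw [Set.disjoint_left]
  rintro a ⟨_, h1⟩ ⟨h2, _⟩
  exact absurd h1 (not_le.2 h2)

lemma hadd_signed (μ : SignedMeasure ℝ) :
    ∀ x y : ℝ, 0 ≤ x → x ≤ y → y ≤ T →
      (μ (Icc 0 y) : ℝ) = μ (Icc 0 x) + μ (Ioc x y) := by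
  intro x y hx hxy _
  rw [← Icc_union_Ioc_eq_Icc hx hxy]
  exact VectorMeasure.of_union (disj_Icc_Ioc x y) measurableSet_Icc measurableSet_Ioc

lemma hadd_integral (ν : Measure ℝ) {S : ℝ → ℝ} (hint : IntegrableOn S (Icc 0 T) ν) :
    ∀ x y : ℝ, 0 ≤ x → x ≤ y → y ≤ T →
      (∫ u in Icc 0 y, S u ∂ν) = (∫ u in Icc 0 x, S u ∂ν) + ∫ u in Ioc x y, S u ∂ν := by
  intro x y hx hxy hyT
  rw [← Icc_union_Ioc_eq_Icc hx hxy]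
  exact setIntegral_union (disj_Icc_Ioc x y) measurableSet_Ioc
    (hint.mono_set (Icc_subset_Icc le_rfl (hxy.trans hyT)))
    (hint.mono_set (fun u hu => ⟨hx.trans hu.1.le, hu.2.trans hyT⟩))

lemma hadd_toReal (ν : Measure ℝ) [IsFiniteMeasure ν] :
    ∀ x y : ℝ, 0 ≤ x → x ≤ y → y ≤ T →
      ((ν (Icc 0 y)).toReal) = (ν (Icc 0 x)).toReal + (ν (Ioc x y)).toReal := by
  intro x y hx hxy _
  rw [← Icc_union_Ioc_eq_Icc hx hxy,
    measure_union (disj_Icc_Ioc x y) measurableSet_Ioc,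
    ENNReal.toReal_add (measure_ne_top _ _) (measure_ne_top _ _)]

lemma signed_apply (μ : SignedMeasure ℝ) {E : Set ℝ} (hE : MeasurableSet E) :
    (μ E : ℝ) = (μ.toJordanDecomposition.posPart E).toReal -
      (μ.toJordanDecomposition.negPart E).toReal := by
  conv_lhs => rw [← μ.toSignedMeasure_toJordanDecomposition]
  rw [JordanDecomposition.toSignedMeasure, Measure.toSignedMeasure_sub_apply hE]
  rfl

lemma tv_apply (μ : SignedMeasure ℝ) (E : Set ℝ) :
    (μ.totalVariation E).toReal = (μ.toJordanDecomposition.posPart E).toReal +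
      (μ.toJordanDecomposition.negPart E).toReal := by
  rw [SignedMeasure.totalVariation, Measure.add_apply,
    ENNReal.toReal_add (measure_ne_top _ _) (measure_ne_top _ _)]

lemma est1 {ν : Measure ℝ} [IsFiniteMeasure ν] {E : Set ℝ}
    {S : ℝ → ℝ} (hint : IntegrableOn S E ν) {p ε : ℝ}
    (hosc : ∀ u ∈ E, |S u - S p| ≤ ε) :
    |S p * (ν E).toReal - ∫ u in E, S u ∂ν| ≤ ε * (ν E).toReal := by
  have hconst : IntegrableOn (fun _ : ℝ => S p) E ν :=
    integrableOn_const (measure_lt_top ν E).ne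
  have h1 : S p * (ν E).toReal = ∫ _ in E, S p ∂ν := by
    rw [setIntegral_const, smul_eq_mul, mul_comm]
    rfl
  rw [h1, ← integral_sub hconst hint]
  have := norm_setIntegral_le_of_norm_le_const (μ := ν) (s := E)
    (f := fun u => S p - S u) (C := ε) (measure_lt_top ν E)
    (fun x hx => by rw [Real.norm_eq_abs, abs_sub_comm]; exact hosc x hx)
  rwa [Real.norm_eq_abs] at this

end Stmt10Aux

namespace Stmt10Aux

variable {T : ℝ} {n : ℕ}

lemma bval_eq (hT : 0 < T) (μ : SignedMeasure ℝ) (hliq : μ (Icc 0 T) = 0) (hn : 2 ≤ n) (i : ℕ) :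
    bval T (fun u => μ (Icc 0 u)) n i = cum T n (fun E => μ E) i := by
  rcases eq_or_ne i 0 with h | h
  · subst h
    rw [bval, if_pos (Or.inl rfl), cum, if_pos rfl]
  · rw [cum, if_neg h, bval]
    by_cases hni : n ≤ i
    · rw [if_pos (Or.inr hni), bpt_eq_T hni (by omega), hliq]
    · rw [if_neg ((not_or).2 ⟨h, hni⟩), bpt, if_neg h, if_neg hni]

lemma main_est (T : ℝ) (hT : 0 < T) (S : ℝ → ℝ) (hS : ContinuousOn S (Icc 0 T))
    (hSpos : ∀ t ∈ Icc (0:ℝ) T, 0 < S t) (μ : SignedMeasure ℝ) (hliq : μ (Icc 0 T) = 0)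
    {ε : ℝ} (hε : 0 < ε) {n : ℕ} (hn : 2 ≤ n)
    (hosc : ∀ x ∈ Icc (0:ℝ) T, ∀ y ∈ Icc (0:ℝ) T, |x - y| ≤ 2 * T / n → |S x - S y| ≤ ε) :
    |(∑ i ∈ Finset.range n, S (((i : ℝ) + 1) * T / n) *
        (bval T (fun u => μ (Icc 0 u)) n (i + 1) - bval T (fun u => μ (Icc 0 u)) n i)) -
      stieltjesIntegral S μ T| ≤ ε * (μ.totalVariation (Icc 0 T)).toReal ∧
    (∑ i ∈ Finset.range n, S (((i : ℝ) + 1) * T / n) *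
        |bval T (fun u => μ (Icc 0 u)) n (i + 1) - bval T (fun u => μ (Icc 0 u)) n i|) ≤
      totalVarIntegral S μ T + ε * (μ.totalVariation (Icc 0 T)).toReal := by
  haveI : IsFiniteMeasure μ.totalVariation := by
    unfold SignedMeasure.totalVariation; infer_instance
  have hintp : IntegrableOn S (Icc 0 T) μ.toJordanDecomposition.posPart :=
    ContinuousOn.integrableOn_compact isCompact_Icc hS
  have hintn : IntegrableOn S (Icc 0 T) μ.toJordanDecomposition.negPart :=
    ContinuousOn.integrableOn_compact isCompact_Icc hS
  have hintt : IntegrableOn S (Icc 0 T) μ.totalVariation :=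
    ContinuousOn.integrableOn_compact isCompact_Icc hS
  have hdiff : ∀ i, bval T (fun u => μ (Icc 0 u)) n (i + 1) - bval T (fun u => μ (Icc 0 u)) n i
      = μ (cell T n i) := by
    intro i
    rw [bval_eq hT μ hliq hn, bval_eq hT μ hliq hn]
    exact (cell_content hT hn (fun E => μ E) (hadd_signed μ) i).symm
  have hq : ∀ i, i < n → ((i : ℝ) + 1) * T / n ∈ Icc (0:ℝ) T := by
    intro i hi
    have hn0 : (0:ℝ) < n := by exact_mod_cast (by omega : 0 < n)
    constructor
    · positivity
    · rw [div_le_iff₀ hn0]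
      have : (i:ℝ) + 1 ≤ n := by exact_mod_cast (by omega : i + 1 ≤ n)
      nlinarith
  have hoscE : ∀ i, i < n → ∀ u ∈ cell T n i, |S u - S (((i : ℝ) + 1) * T / n)| ≤ ε :=
    fun i hi u hu => hosc u (cell_subset hT i hu) _ (hq i hi) (cell_dist hT hi hu)
  have hμcell : ∀ i, (μ (cell T n i) : ℝ) =
      (μ.toJordanDecomposition.posPart (cell T n i)).toReal
      - (μ.toJordanDecomposition.negPart (cell T n i)).toReal :=
    fun i => signed_apply μ (cell_measurable i)
  have hsum_tv := cell_sum hT hn (fun E => (μ.totalVariation E).toReal)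
    (hadd_toReal μ.totalVariation)
  have hsum_p := cell_sum hT hn
    (fun E => ∫ u in E, S u ∂μ.toJordanDecomposition.posPart)
    (hadd_integral _ hintp)
  have hsum_n := cell_sum hT hn
    (fun E => ∫ u in E, S u ∂μ.toJordanDecomposition.negPart)
    (hadd_integral _ hintn)
  have hsum_t := cell_sum hT hn
    (fun E => ∫ u in E, S u ∂μ.totalVariation)
    (hadd_integral _ hintt)
  constructor
  · -- first estimate
    have h1 : stieltjesIntegral S μ T = ∑ i ∈ Finset.range n,
        ((∫ u in cell T n i, S u ∂μ.toJordanDecomposition.posPart) -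
          ∫ u in cell T n i, S u ∂μ.toJordanDecomposition.negPart) := by
      unfold stieltjesIntegral
      rw [← hsum_p, ← hsum_n, ← Finset.sum_sub_distrib]
    have percell1 : ∀ i ∈ Finset.range n,
        |S (((i : ℝ) + 1) * T / n) *
            (bval T (fun u => μ (Icc 0 u)) n (i + 1) - bval T (fun u => μ (Icc 0 u)) n i) -
          ((∫ u in cell T n i, S u ∂μ.toJordanDecomposition.posPart) -
            ∫ u in cell T n i, S u ∂μ.toJordanDecomposition.negPart)| ≤
        ε * (μ.totalVariation (cell T n i)).toReal := by
      intro i hi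
      rw [Finset.mem_range] at hi
      have e1 := est1 (hintp.mono_set (cell_subset hT i)) (hoscE i hi)
      have e2 := est1 (hintn.mono_set (cell_subset hT i)) (hoscE i hi)
      have heq : S (((i : ℝ) + 1) * T / n) *
            (bval T (fun u => μ (Icc 0 u)) n (i + 1) - bval T (fun u => μ (Icc 0 u)) n i) -
          ((∫ u in cell T n i, S u ∂μ.toJordanDecomposition.posPart) -
            ∫ u in cell T n i, S u ∂μ.toJordanDecomposition.negPart) =
          (S (((i : ℝ) + 1) * T / n) * (μ.toJordanDecomposition.posPart (cell T n i)).toReal -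
              ∫ u in cell T n i, S u ∂μ.toJordanDecomposition.posPart) -
            (S (((i : ℝ) + 1) * T / n) * (μ.toJordanDecomposition.negPart (cell T n i)).toReal -
              ∫ u in cell T n i, S u ∂μ.toJordanDecomposition.negPart) := by
        rw [hdiff i, hμcell i]; ring
      rw [heq, tv_apply]
      calc |_ - _| ≤ |_| + |_| := abs_sub _ _
        _ ≤ ε * (μ.toJordanDecomposition.posPart (cell T n i)).toReal +
            ε * (μ.toJordanDecomposition.negPart (cell T n i)).toReal := add_le_add e1 e2
        _ = ε * ((μ.toJordanDecomposition.posPart (cell T n i)).toReal +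
            (μ.toJordanDecomposition.negPart (cell T n i)).toReal) := by ring
    rw [h1, ← Finset.sum_sub_distrib]
    calc |∑ i ∈ Finset.range n, _| ≤ ∑ i ∈ Finset.range n, _ :=
        Finset.abs_sum_le_sum_abs _ _
      _ ≤ ∑ i ∈ Finset.range n, ε * (μ.totalVariation (cell T n i)).toReal :=
        Finset.sum_le_sum percell1
      _ = ε * ∑ i ∈ Finset.range n, (μ.totalVariation (cell T n i)).toReal := by
        rw [Finset.mul_sum]
      _ = ε * (μ.totalVariation (Icc 0 T)).toReal := by rw [hsum_tv]
  · -- second estimate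
    have percell2 : ∀ i ∈ Finset.range n,
        S (((i : ℝ) + 1) * T / n) *
            |bval T (fun u => μ (Icc 0 u)) n (i + 1) - bval T (fun u => μ (Icc 0 u)) n i| ≤
          (∫ u in cell T n i, S u ∂μ.totalVariation) +
            ε * (μ.totalVariation (cell T n i)).toReal := by
      intro i hi
      rw [Finset.mem_range] at hi
      rw [hdiff i]
      have hSq : 0 ≤ S (((i : ℝ) + 1) * T / n) := (hSpos _ (hq i hi)).le
      have habs : |(μ (cell T n i) : ℝ)| ≤ (μ.totalVariation (cell T n i)).toReal := by
        rw [hμcell i, tv_apply]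
        refine (abs_sub _ _).trans (le_of_eq ?_)
        rw [abs_of_nonneg ENNReal.toReal_nonneg, abs_of_nonneg ENNReal.toReal_nonneg]
      have e3 := est1 (hintt.mono_set (cell_subset hT i)) (hoscE i hi)
      have e4 : S (((i : ℝ) + 1) * T / n) * (μ.totalVariation (cell T n i)).toReal -
          (∫ u in cell T n i, S u ∂μ.totalVariation) ≤
          ε * (μ.totalVariation (cell T n i)).toReal := (le_abs_self _).trans e3
      calc S (((i : ℝ) + 1) * T / n) * |(μ (cell T n i) : ℝ)| ≤
          S (((i : ℝ) + 1) * T / n) * (μ.totalVariation (cell T n i)).toReal :=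
            mul_le_mul_of_nonneg_left habs hSq
        _ ≤ _ := by linarith
    calc (∑ i ∈ Finset.range n, S (((i : ℝ) + 1) * T / n) *
            |bval T (fun u => μ (Icc 0 u)) n (i + 1) - bval T (fun u => μ (Icc 0 u)) n i|) ≤
        ∑ i ∈ Finset.range n, ((∫ u in cell T n i, S u ∂μ.totalVariation) +
          ε * (μ.totalVariation (cell T n i)).toReal) := Finset.sum_le_sum percell2
      _ = (∑ i ∈ Finset.range n, ∫ u in cell T n i, S u ∂μ.totalVariation) +
          ε * ∑ i ∈ Finset.range n, (μ.totalVariation (cell T n i)).toReal := by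
        rw [Finset.sum_add_distrib, Finset.mul_sum]
      _ = totalVarIntegral S μ T + ε * (μ.totalVariation (Icc 0 T)).toReal := by
        rw [hsum_t, hsum_tv]; rfl

end Stmt10Aux

/-- Inequality (4.5) in Step 2 of the proof of Lemma 4.2 of the paper: for a strategy `γ`
(encoded by the signed measure `μ`, `γ_t = μ([0,t])`) with `γ_T = 0`, the terminal value
`V^γ_T = −∫_{[0,T]} S dγ − κ∫_{[0,T]} S |dγ|` satisfies
`V^γ_T ≤ liminf_n V^{γ̄^n}_T` for the discretized strategies `γ̄^n`. -/
theorem stmt_10 (T κ : ℝ) (hT : 0 < T) (hκ : κ ∈ Set.Ioo (0:ℝ) 1)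
    (S : ℝ → ℝ) (hS : ContinuousOn S (Icc 0 T)) (hSpos : ∀ t ∈ Icc (0:ℝ) T, 0 < S t)
    (μ : SignedMeasure ℝ) (hliq : μ (Icc 0 T) = 0) :
    -(stieltjesIntegral S μ T) - κ * totalVarIntegral S μ T ≤
      Filter.liminf
        (fun n => discreteTerminalValue T κ S (fun u => μ (Icc 0 u)) n)
        Filter.atTop := by
  obtain ⟨hκ0, hκ1⟩ := hκ
  set V := (μ.totalVariation (Icc 0 T)).toReal with hV
  have hV0 : 0 ≤ V := ENNReal.toReal_nonneg
  have hUC := Metric.uniformContinuousOn_iff.1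
    (isCompact_Icc.uniformContinuousOn_of_continuous hS)
  have key : ∀ ε : ℝ, 0 < ε → ∀ᶠ n : ℕ in Filter.atTop,
      |(∑ i ∈ Finset.range n, S (((i : ℝ) + 1) * T / n) *
          (bval T (fun u => μ (Icc 0 u)) n (i + 1) - bval T (fun u => μ (Icc 0 u)) n i)) -
        stieltjesIntegral S μ T| ≤ ε * V ∧
      (∑ i ∈ Finset.range n, S (((i : ℝ) + 1) * T / n) *
          |bval T (fun u => μ (Icc 0 u)) n (i + 1) - bval T (fun u => μ (Icc 0 u)) n i|) ≤
        totalVarIntegral S μ T + ε * V := by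
    intro ε hε
    obtain ⟨δ, hδ, hδ'⟩ := hUC ε hε
    have h2T : Filter.Tendsto (fun m : ℕ => 2 * T / m) Filter.atTop (nhds 0) :=
      tendsto_const_div_atTop_nhds_zero_nat (2 * T)
    have hev : ∀ᶠ m : ℕ in Filter.atTop, 2 * T / m < δ :=
      Filter.Tendsto.eventually_lt_const hδ h2T
    filter_upwards [hev, Filter.eventually_ge_atTop 2] with m h1 h2
    refine Stmt10Aux.main_est T hT S hS hSpos μ hliq hε h2 ?_
    intro x hx y hy hxy
    have := hδ' x hx y hy (by rw [Real.dist_eq]; exact lt_of_le_of_lt hxy h1)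
    rw [Real.dist_eq] at this
    exact this.le
  have hBnn : ∀ n : ℕ, 0 ≤ ∑ i ∈ Finset.range n, S (((i : ℝ) + 1) * T / n) *
      |bval T (fun u => μ (Icc 0 u)) n (i + 1) - bval T (fun u => μ (Icc 0 u)) n i| := by
    intro n
    apply Finset.sum_nonneg
    intro i hi
    rw [Finset.mem_range] at hi
    have hn0 : (0:ℝ) < n := by exact_mod_cast (by omega : 0 < n)
    have hqi : ((i : ℝ) + 1) * T / n ∈ Icc (0:ℝ) T := by
      constructor
      · positivity
      · rw [div_le_iff₀ hn0]
        have : (i:ℝ) + 1 ≤ n := by exact_mod_cast (by omega : i + 1 ≤ n)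
        nlinarith
    exact mul_nonneg (hSpos _ hqi).le (abs_nonneg _)
  have hlow : ∀ ε : ℝ, 0 < ε → ∀ᶠ n : ℕ in Filter.atTop,
      (-(stieltjesIntegral S μ T) - κ * totalVarIntegral S μ T) - (1 + κ) * (ε * V) ≤
        discreteTerminalValue T κ S (fun u => μ (Icc 0 u)) n := by
    intro ε hε
    filter_upwards [key ε hε] with n hk
    obtain ⟨k1, k2⟩ := hk
    have hA := (abs_le.1 k1).2
    have hk2 : κ * (∑ i ∈ Finset.range n, S (((i : ℝ) + 1) * T / n) *
        |bval T (fun u => μ (Icc 0 u)) n (i + 1) - bval T (fun u => μ (Icc 0 u)) n i|) ≤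
        κ * (totalVarIntegral S μ T + ε * V) := mul_le_mul_of_nonneg_left k2 hκ0.le
    rw [discreteTerminalValue]
    nlinarith [mul_nonneg hκ0.le (mul_nonneg hε.le hV0)]
  have hhigh : ∀ᶠ n : ℕ in Filter.atTop,
      discreteTerminalValue T κ S (fun u => μ (Icc 0 u)) n ≤
        -(stieltjesIntegral S μ T) + 1 * V := by
    filter_upwards [key 1 one_pos] with n hk
    obtain ⟨k1, _⟩ := hk
    have hA := (abs_le.1 k1).1
    have hB := mul_nonneg hκ0.le (hBnn n)
    rw [discreteTerminalValue]
    linarith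
  have hbdd : Filter.IsBoundedUnder (· ≤ ·) Filter.atTop
      (fun n => discreteTerminalValue T κ S (fun u => μ (Icc 0 u)) n) :=
    ⟨-(stieltjesIntegral S μ T) + 1 * V, Filter.eventually_map.2 hhigh⟩
  have hcob := hbdd.isCoboundedUnder_ge
  refine le_of_forall_pos_le_add ?_
  intro η hη
  have hD : (0:ℝ) < (1 + κ) * V + 1 := by nlinarith
  set ε := η / ((1 + κ) * V + 1) with hε
  have hεpos : 0 < ε := div_pos hη hD
  have h1 := Filter.le_liminf_of_le hcob (hlow ε hεpos)
  have h2 : (1 + κ) * (ε * V) ≤ η := by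
    rw [hε]
    rw [div_mul_eq_mul_div, mul_div_assoc']
    rw [div_le_iff₀ hD]
    nlinarith
  linarith
end

section
/- Let T > 0, κ ∈ (0,1), let S : [0,T] → (0,∞) be continuous, and let γ : [0,T] → ℝ be right-continuous of bounded variation with γ_{0−} = 0 and γ_T = 0. For n ∈ ℕ define γ̄^n_t := Σ_{i=1}^{n−1} γ_{(i−1)T/n} · 1_{[iT/n, (i+1)T/n)}(t) for t ∈ [0,T) and γ̄^n_T := 0. Then liminf_{n→∞} inf_{0≤t≤T} V^{γ̄^n}_t ≥ inf_{0≤t≤T} V^γ_t. -/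
open MeasureTheory Set

/-- The discretized strategy `γ̄^n_t = Σ_{i=1}^{n−1} γ_{(i−1)T/n} 1_{[iT/n,(i+1)T/n)}(t)`
(so in particular `γ̄^n_T = 0`). -/
noncomputable def gbar (T : ℝ) (γ : ℝ → ℝ) (n : ℕ) (t : ℝ) : ℝ :=
  ∑ i ∈ Finset.Ico 1 n,
    γ (((i : ℝ) - 1) * T / n) *
      Set.indicator (Set.Ico ((i : ℝ) * T / n) (((i : ℝ) + 1) * T / n)) (fun _ => 1) t

/-- The portfolio value `V^{γ̄^n}_t` of the piecewise-constant strategy `γ̄^n`, whose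
Lebesgue–Stieltjes measure is the sum of the point masses
`(bval(i+1) − bval(i)) δ_{(i+1)T/n}`, `i = 0, …, n−1`. -/
noncomputable def stepPortfolioValue (T κ : ℝ) (S γ : ℝ → ℝ) (n : ℕ) (t : ℝ) : ℝ :=
  gbar T γ n t * S t
    - ∑ i ∈ Finset.range n,
        Set.indicator (Set.Iic t) (fun _ => 1) (((i : ℝ) + 1) * T / n) *
          S (((i : ℝ) + 1) * T / n) * (bval T γ n (i + 1) - bval T γ n i)
    - κ * |gbar T γ n t| * S t
    - κ * ∑ i ∈ Finset.range n,
        Set.indicator (Set.Iic t) (fun _ => 1) (((i : ℝ) + 1) * T / n) *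
          S (((i : ℝ) + 1) * T / n) * |bval T γ n (i + 1) - bval T γ n i|

lemma sm_apply (μ : SignedMeasure ℝ) {s : Set ℝ} (hs : MeasurableSet s) :
    μ s = (μ.toJordanDecomposition.posPart s).toReal -
      (μ.toJordanDecomposition.negPart s).toReal := by
  conv_lhs => rw [← μ.toSignedMeasure_toJordanDecomposition]
  rw [JordanDecomposition.toSignedMeasure, VectorMeasure.sub_apply,
    Measure.toSignedMeasure_apply_measurable hs, Measure.toSignedMeasure_apply_measurable hs]
  rfl

instance tv_finite (μ : SignedMeasure ℝ) : IsFiniteMeasure μ.totalVariation := by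
  rw [SignedMeasure.totalVariation]; infer_instance

lemma tv_toReal (μ : SignedMeasure ℝ) (s : Set ℝ) :
    (μ.totalVariation s).toReal = (μ.toJordanDecomposition.posPart s).toReal +
      (μ.toJordanDecomposition.negPart s).toReal := by
  rw [SignedMeasure.totalVariation, Measure.add_apply,
    ENNReal.toReal_add (measure_ne_top _ _) (measure_ne_top _ _)]

lemma abs_apply_le_tv (μ : SignedMeasure ℝ) {s : Set ℝ} (hs : MeasurableSet s) :
    |μ s| ≤ (μ.totalVariation s).toReal := by
  rw [sm_apply μ hs, tv_toReal]
  refine (abs_sub _ _).trans ?_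
  simp [abs_of_nonneg ENNReal.toReal_nonneg]

lemma small_meas (m : Measure ℝ) [IsFiniteMeasure m] {A : Set ℝ} {S : ℝ → ℝ} {c ε : ℝ}
    (hint : IntegrableOn S A m) (hc : ∀ u ∈ A, |S u - c| ≤ ε) :
    |c * (m A).toReal - ∫ u in A, S u ∂m| ≤ ε * (m A).toReal := by
  have h1 : c * (m A).toReal = ∫ _ in A, c ∂m := by
    rw [setIntegral_const, smul_eq_mul, mul_comm]
    rfl
  rw [h1, ← integral_sub (show IntegrableOn (fun _ : ℝ => c) A m from integrableOn_const (measure_ne_top _ _)) hint]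
  have := norm_setIntegral_le_of_norm_le_const (μ := m) (s := A)
    (f := fun u => c - S u) (C := ε) (measure_lt_top _ _)
    (fun x hx => by rw [Real.norm_eq_abs, abs_sub_comm]; exact hc x hx)
  simpa [Measure.real] using this

lemma small_signed (μ : SignedMeasure ℝ) {A : Set ℝ} (hA : MeasurableSet A) {S : ℝ → ℝ} {c ε : ℝ}
    (hp : IntegrableOn S A μ.toJordanDecomposition.posPart)
    (hq : IntegrableOn S A μ.toJordanDecomposition.negPart)
    (hc : ∀ u ∈ A, |S u - c| ≤ ε) :
    |c * μ A - ((∫ u in A, S u ∂μ.toJordanDecomposition.posPart) -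
      (∫ u in A, S u ∂μ.toJordanDecomposition.negPart))| ≤ ε * (μ.totalVariation A).toReal := by
  rw [sm_apply μ hA, tv_toReal]
  have h1 := small_meas μ.toJordanDecomposition.posPart hp hc
  have h2 := small_meas μ.toJordanDecomposition.negPart hq hc
  have : c * ((μ.toJordanDecomposition.posPart A).toReal -
      (μ.toJordanDecomposition.negPart A).toReal) -
      ((∫ u in A, S u ∂μ.toJordanDecomposition.posPart) -
        (∫ u in A, S u ∂μ.toJordanDecomposition.negPart)) =
      (c * (μ.toJordanDecomposition.posPart A).toReal - ∫ u in A, S u ∂μ.toJordanDecomposition.posPart)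
      - (c * (μ.toJordanDecomposition.negPart A).toReal - ∫ u in A, S u ∂μ.toJordanDecomposition.negPart) := by ring
  rw [this, mul_add]
  exact (abs_sub _ _).trans (add_le_add h1 h2)

lemma small_tv (μ : SignedMeasure ℝ) {A : Set ℝ} (hA : MeasurableSet A) {S : ℝ → ℝ} {c ε : ℝ}
    (hint : IntegrableOn S A μ.totalVariation)
    (hc : ∀ u ∈ A, |S u - c| ≤ ε) (hcpos : 0 ≤ c) :
    c * |μ A| ≤ (∫ u in A, S u ∂μ.totalVariation) + ε * (μ.totalVariation A).toReal := by
  have h1 : c * |μ A| ≤ c * (μ.totalVariation A).toReal :=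
    mul_le_mul_of_nonneg_left (abs_apply_le_tv μ hA) hcpos
  have h2 := small_meas μ.totalVariation hint hc
  have := (le_abs_self _).trans h2
  linarith [this]

lemma grid_mono {T : ℝ} (hT : 0 < T) (n : ℕ) {a b : ℝ} (h : a ≤ b) :
    a * T / n ≤ b * T / n := by
  rcases Nat.eq_zero_or_pos n with rfl | hn
  · simp
  · have hn' : (0:ℝ) < n := by exact_mod_cast hn
    gcongr

lemma gbar_apply {T : ℝ} (hT : 0 < T) (γ : ℝ → ℝ) {n i : ℕ} (h1 : 1 ≤ i) (h2 : i < n) {t : ℝ}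
    (ht1 : (i : ℝ) * T / n ≤ t) (ht2 : t < ((i : ℝ) + 1) * T / n) :
    gbar T γ n t = γ (((i : ℝ) - 1) * T / n) := by
  rw [gbar, Finset.sum_eq_single i]
  · rw [Set.indicator_of_mem (Set.mem_Ico.2 ⟨ht1, ht2⟩), mul_one]
  · intro j hj hne
    rw [Set.indicator_of_notMem, mul_zero]
    intro hmem
    rcases Set.mem_Ico.1 hmem with ⟨hj1, hj2⟩
    rcases lt_or_gt_of_ne hne with h | h
    · have hc : ((j:ℝ)+1) ≤ (i:ℝ) := by exact_mod_cast h
      have := grid_mono hT n hc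
      linarith
    · have hc : ((i:ℝ)+1) ≤ (j:ℝ) := by exact_mod_cast h
      have := grid_mono hT n hc
      linarith
  · intro hi
    exact absurd (Finset.mem_Ico.2 ⟨h1, h2⟩) hi

lemma gbar_zero {T : ℝ} (hT : 0 < T) (γ : ℝ → ℝ) {n : ℕ} {t : ℝ}
    (ht2 : t < (1:ℝ) * T / n) : gbar T γ n t = 0 := by
  rw [gbar]
  apply Finset.sum_eq_zero
  intro j hj
  rcases Finset.mem_Ico.1 hj with ⟨hj1, _⟩
  rw [Set.indicator_of_notMem, mul_zero]
  intro hmem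
  rcases Set.mem_Ico.1 hmem with ⟨hja, _⟩
  have hc : (1:ℝ) ≤ (j:ℝ) := by exact_mod_cast hj1
  have := grid_mono hT n hc
  linarith

lemma gbar_T {T : ℝ} (hT : 0 < T) (γ : ℝ → ℝ) {n : ℕ} : gbar T γ n T = 0 := by
  rw [gbar]
  apply Finset.sum_eq_zero
  intro j hj
  rcases Finset.mem_Ico.1 hj with ⟨_, hj2⟩
  rw [Set.indicator_of_notMem, mul_zero]
  intro hmem
  rcases Set.mem_Ico.1 hmem with ⟨_, hjb⟩
  have hn : (0:ℝ) < n := by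
    have : 0 < n := Nat.lt_of_le_of_lt (Nat.zero_le j) hj2
    exact_mod_cast this
  have hc : ((j:ℝ)+1) ≤ (n:ℝ) := by exact_mod_cast Nat.succ_le_of_lt hj2
  have : ((j:ℝ)+1) * T / n ≤ (n:ℝ) * T / n := grid_mono hT n hc
  rw [mul_div_assoc, mul_div_assoc] at this
  have hTn : (n:ℝ) * (T / n) = T := by field_simp
  rw [mul_div_assoc] at hjb
  nlinarith [hjb, this, hTn]

lemma ind_sum {T : ℝ} (hT : 0 < T) {n i : ℕ} (hi : i < n) {t : ℝ}
    (ht1 : (i : ℝ) * T / n ≤ t) (ht2 : t < ((i : ℝ) + 1) * T / n) (X : ℕ → ℝ) :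
    ∑ j ∈ Finset.range n,
      Set.indicator (Set.Iic t) (fun _ => 1) (((j : ℝ) + 1) * T / n) * X j
      = ∑ j ∈ Finset.range i, X j := by
  rw [← Finset.sum_subset (Finset.range_subset_range.2 hi.le) (by
    intro j _ hj
    have hj' : i ≤ j := Nat.le_of_not_lt (fun h => hj (Finset.mem_range.2 h))
    have hc : ((i:ℝ)+1) ≤ ((j:ℝ)+1) := by exact_mod_cast Nat.succ_le_succ hj'
    rw [Set.indicator_of_notMem, zero_mul]
    intro hmem
    have := (grid_mono hT n hc).trans_lt (lt_of_le_of_lt (Set.mem_Iic.1 hmem) ht2)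
    exact lt_irrefl _ this)]
  apply Finset.sum_congr rfl
  intro j hj
  have hj' : j < i := Finset.mem_range.1 hj
  have hc : ((j:ℝ)+1) ≤ (i:ℝ) := by exact_mod_cast hj'
  rw [Set.indicator_of_mem (Set.mem_Iic.2 ((grid_mono hT n hc).trans ht1)), one_mul]

lemma ind_sum_T {T : ℝ} (hT : 0 < T) {n : ℕ} (hn : 1 ≤ n) (X : ℕ → ℝ) :
    ∑ j ∈ Finset.range n,
      Set.indicator (Set.Iic T) (fun _ => 1) (((j : ℝ) + 1) * T / n) * X j
      = ∑ j ∈ Finset.range n, X j := by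
  apply Finset.sum_congr rfl
  intro j hj
  have hjn : ((j:ℝ)+1) ≤ (n:ℝ) := by exact_mod_cast Nat.succ_le_of_lt (Finset.mem_range.1 hj)
  have hn' : (0:ℝ) < n := by exact_mod_cast hn
  have : ((j:ℝ)+1) * T / n ≤ (n:ℝ) * T / n := grid_mono hT n hjn
  have hTn : (n:ℝ) * T / n = T := by field_simp
  rw [Set.indicator_of_mem (Set.mem_Iic.2 (by linarith)), one_mul]

lemma int_on {T : ℝ} {S : ℝ → ℝ} (hS : ContinuousOn S (Icc 0 T)) (m : Measure ℝ)
    [IsFiniteMeasure m] {A : Set ℝ} (hA : A ⊆ Icc 0 T) : IntegrableOn S A m :=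
  (hS.integrableOn_compact isCompact_Icc).mono_set hA

lemma disj_Icc_Ioc {a b : ℝ} : Disjoint (Icc (0:ℝ) a) (Ioc a b) :=
  Set.disjoint_left.2 fun x hx hx' => absurd hx'.1 (not_lt.2 hx.2)

lemma sm_split (μ : SignedMeasure ℝ) {a b : ℝ} (h0 : 0 ≤ a) (hab : a ≤ b) :
    μ (Icc 0 b) = μ (Icc 0 a) + μ (Ioc a b) := by
  rw [← Icc_union_Ioc_eq_Icc h0 hab]
  exact VectorMeasure.of_union disj_Icc_Ioc measurableSet_Icc measurableSet_Ioc

lemma meas_split (m : Measure ℝ) [IsFiniteMeasure m] {a b : ℝ} (h0 : 0 ≤ a) (hab : a ≤ b) :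
    (m (Icc 0 b)).toReal = (m (Icc 0 a)).toReal + (m (Ioc a b)).toReal := by
  rw [← Icc_union_Ioc_eq_Icc h0 hab, measure_union disj_Icc_Ioc measurableSet_Ioc,
    ENNReal.toReal_add (measure_ne_top _ _) (measure_ne_top _ _)]

lemma int_split (m : Measure ℝ) [IsFiniteMeasure m] {S : ℝ → ℝ} {a b : ℝ}
    (h0 : 0 ≤ a) (hab : a ≤ b)
    (h1 : IntegrableOn S (Icc 0 a) m) (h2 : IntegrableOn S (Ioc a b) m) :
    ∫ u in Icc 0 b, S u ∂m = (∫ u in Icc 0 a, S u ∂m) + ∫ u in Ioc a b, S u ∂m := by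
  rw [← Icc_union_Ioc_eq_Icc h0 hab, setIntegral_union disj_Icc_Ioc measurableSet_Ioc h1 h2]

lemma bval_zero (T : ℝ) (γ : ℝ → ℝ) (n : ℕ) : bval T γ n 0 = 0 := by simp [bval]

lemma bval_apply (T : ℝ) (γ : ℝ → ℝ) {n j : ℕ} (h1 : 1 ≤ j) (h2 : j < n) :
    bval T γ n j = γ (((j:ℝ) - 1) * T / n) := by
  rw [bval, if_neg]
  push_neg
  exact ⟨by omega, by omega⟩

lemma bval_top (T : ℝ) (γ : ℝ → ℝ) (n : ℕ) : bval T γ n n = 0 := by simp [bval]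

lemma sum_est (T : ℝ) (hT : 0 < T) (S : ℝ → ℝ) (hS : ContinuousOn S (Icc 0 T))
    (hSpos : ∀ t ∈ Icc (0:ℝ) T, 0 < S t)
    (μ : SignedMeasure ℝ) {n : ℕ} (hn : 2 ≤ n) {ε : ℝ} (hε : 0 ≤ ε)
    (hmod : ∀ x ∈ Icc (0:ℝ) T, ∀ y ∈ Icc (0:ℝ) T, |x - y| ≤ 2 * T / n → |S x - S y| ≤ ε) :
    ∀ i, 1 ≤ i → i ≤ n - 1 →
      |(∑ j ∈ Finset.range i, S (((j:ℝ)+1)*T/n) *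
          (bval T (fun u => μ (Icc 0 u)) n (j+1) - bval T (fun u => μ (Icc 0 u)) n j))
        - stieltjesIntegral S μ (((i:ℝ)-1)*T/n)| ≤
          ε * (μ.totalVariation (Icc 0 (((i:ℝ)-1)*T/n))).toReal
      ∧ (∑ j ∈ Finset.range i, S (((j:ℝ)+1)*T/n) *
          |bval T (fun u => μ (Icc 0 u)) n (j+1) - bval T (fun u => μ (Icc 0 u)) n j|)
        ≤ totalVarIntegral S μ (((i:ℝ)-1)*T/n) +
          ε * (μ.totalVariation (Icc 0 (((i:ℝ)-1)*T/n))).toReal := by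
  have hn0 : (0:ℝ) < n := by positivity
  have hgridmem : ∀ k : ℝ, 0 ≤ k → k ≤ n → k * T / n ∈ Icc (0:ℝ) T := by
    intro k hk1 hk2
    constructor
    · positivity
    · have := grid_mono hT n hk2
      have hTn : (n:ℝ) * T / n = T := by field_simp
      linarith [this.trans_eq hTn]
  have hTn : (n:ℝ) * T / n = T := by field_simp
  have hPQ : ∀ (m : Measure ℝ) [IsFiniteMeasure m], ∀ A ⊆ Icc (0:ℝ) T, IntegrableOn S A m :=
    fun m _ A hA => int_on hS m hA
  intro i hi1
  induction i, hi1 using Nat.le_induction with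
  | base =>
    intro _
    have hx : (((0:ℕ):ℝ)+1) * T / n ∈ Icc (0:ℝ) T := by
      apply hgridmem <;> norm_num
      exact_mod_cast (by omega : 1 ≤ n)
    have hc : ∀ u ∈ Icc (0:ℝ) 0, |S u - S ((((0:ℕ):ℝ)+1) * T / n)| ≤ ε := by
      intro u hu
      have hu0 : u = 0 := le_antisymm hu.2 hu.1
      subst hu0
      apply hmod 0 ⟨le_rfl, hT.le⟩ _ hx
      rw [zero_sub, abs_neg, abs_of_nonneg (by positivity)]
      rw [div_le_div_iff₀ hn0 hn0]
      push_cast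
      nlinarith
    have hb1 : bval T (fun u => μ (Icc 0 u)) n 1 = μ (Icc 0 0) := by
      rw [bval_apply T _ le_rfl (by omega)]
      norm_num
    have hsub : Icc (0:ℝ) 0 ⊆ Icc 0 T := Icc_subset_Icc le_rfl hT.le
    have e0 : (((1:ℕ):ℝ) - 1) * T / n = 0 := by norm_num
    constructor
    · rw [Finset.sum_range_one, hb1, bval_zero, sub_zero, e0, stieltjesIntegral]
      exact small_signed μ measurableSet_Icc (hPQ _ _ hsub) (hPQ _ _ hsub) hc
    · rw [Finset.sum_range_one, hb1, bval_zero, sub_zero, e0, totalVarIntegral]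
      exact small_tv μ measurableSet_Icc (hPQ _ _ hsub) hc (hSpos _ hx).le
  | succ i hi ih =>
    intro hin1
    obtain ⟨ih1, ih2⟩ := ih (by omega)
    set a : ℝ := ((i:ℝ) - 1) * T / n with ha_def
    set b : ℝ := (i:ℝ) * T / n with hb_def
    set x : ℝ := ((i:ℝ) + 1) * T / n with hx_def
    have hi' : (1:ℝ) ≤ (i:ℝ) := by exact_mod_cast hi
    have hiN : ((i:ℝ) + 1) ≤ (n:ℝ) := by exact_mod_cast (by omega : i + 1 ≤ n)
    have ha0 : 0 ≤ a := by
      apply div_nonneg (mul_nonneg (by linarith) hT.le) hn0.le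
    have hab : a ≤ b := grid_mono hT n (by linarith)
    have hbT : b ≤ T := by
      have := grid_mono hT n (by linarith : (i:ℝ) ≤ (n:ℝ))
      linarith [this.trans_eq hTn]
    have hxmem : x ∈ Icc (0:ℝ) T := hgridmem _ (by linarith) hiN
    have hsub : Ioc a b ⊆ Icc (0:ℝ) T := fun u hu => ⟨ha0.trans hu.1.le, hu.2.trans hbT⟩
    have hsuba : Icc (0:ℝ) a ⊆ Icc 0 T := Icc_subset_Icc le_rfl (hab.trans hbT)
    have hxa : x - a = 2 * T / n := by rw [hx_def, ha_def]; ring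
    have hc : ∀ u ∈ Ioc a b, |S u - S x| ≤ ε := by
      intro u hu
      apply hmod u (hsub hu) x hxmem
      have hub : u ≤ b := hu.2
      have hbx : b ≤ x := grid_mono hT n (by linarith)
      rw [abs_of_nonpos (by linarith)]
      linarith [hu.1]
    have eτ : ((((i+1):ℕ):ℝ) - 1) * T / n = b := by push_cast; rw [hb_def]; ring_nf
    have hbv1 : bval T (fun u => μ (Icc 0 u)) n (i+1) = μ (Icc 0 b) := by
      rw [bval_apply T _ (by omega) (by omega), eτ]
    have hbv0 : bval T (fun u => μ (Icc 0 u)) n i = μ (Icc 0 a) := by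
      rw [bval_apply T _ hi (by omega)]
    have hd : bval T (fun u => μ (Icc 0 u)) n (i+1) - bval T (fun u => μ (Icc 0 u)) n i
        = μ (Ioc a b) := by
      rw [hbv1, hbv0, sm_split μ ha0 hab]; ring
    have hsplitp := int_split μ.toJordanDecomposition.posPart ha0 hab
      (hPQ _ _ hsuba) (hPQ _ _ hsub)
    have hsplitq := int_split μ.toJordanDecomposition.negPart ha0 hab
      (hPQ _ _ hsuba) (hPQ _ _ hsub)
    have hsplitv := int_split μ.totalVariation ha0 hab (hPQ _ _ hsuba) (hPQ _ _ hsub)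
    have hms := meas_split μ.totalVariation ha0 hab
    have hsmall := small_signed μ measurableSet_Ioc (hPQ _ _ hsub) (hPQ _ _ hsub) hc
    have hsmalltv := small_tv μ measurableSet_Ioc (hPQ _ _ hsub) hc (hSpos _ hxmem).le
    rw [eτ]
    constructor
    · rw [Finset.sum_range_succ, hd, stieltjesIntegral, hsplitp, hsplitq]
      rw [stieltjesIntegral] at ih1
      have hre : (∑ j ∈ Finset.range i, S (((j:ℝ)+1)*T/n) *
            (bval T (fun u => μ (Icc 0 u)) n (j+1) - bval T (fun u => μ (Icc 0 u)) n j))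
          + S x * μ (Ioc a b)
          - ((∫ u in Icc 0 a, S u ∂μ.toJordanDecomposition.posPart)
              + (∫ u in Ioc a b, S u ∂μ.toJordanDecomposition.posPart)
            - ((∫ u in Icc 0 a, S u ∂μ.toJordanDecomposition.negPart)
              + (∫ u in Ioc a b, S u ∂μ.toJordanDecomposition.negPart)))
          = ((∑ j ∈ Finset.range i, S (((j:ℝ)+1)*T/n) *
            (bval T (fun u => μ (Icc 0 u)) n (j+1) - bval T (fun u => μ (Icc 0 u)) n j))
            - ((∫ u in Icc 0 a, S u ∂μ.toJordanDecomposition.posPart)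
              - (∫ u in Icc 0 a, S u ∂μ.toJordanDecomposition.negPart)))
          + (S x * μ (Ioc a b)
            - ((∫ u in Ioc a b, S u ∂μ.toJordanDecomposition.posPart)
              - (∫ u in Ioc a b, S u ∂μ.toJordanDecomposition.negPart))) := by ring
      rw [hre, hms, mul_add]
      exact (abs_add_le _ _).trans (add_le_add ih1 hsmall)
    · rw [Finset.sum_range_succ, hd, totalVarIntegral, hsplitv, hms]
      rw [totalVarIntegral] at ih2
      linarith

lemma sum_est_T (T : ℝ) (hT : 0 < T) (S : ℝ → ℝ) (hS : ContinuousOn S (Icc 0 T))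
    (hSpos : ∀ t ∈ Icc (0:ℝ) T, 0 < S t)
    (μ : SignedMeasure ℝ) (hliq : μ (Icc 0 T) = 0)
    {n : ℕ} (hn : 2 ≤ n) {ε : ℝ} (hε : 0 ≤ ε)
    (hmod : ∀ x ∈ Icc (0:ℝ) T, ∀ y ∈ Icc (0:ℝ) T, |x - y| ≤ 2 * T / n → |S x - S y| ≤ ε) :
    |(∑ j ∈ Finset.range n, S (((j:ℝ)+1)*T/n) *
        (bval T (fun u => μ (Icc 0 u)) n (j+1) - bval T (fun u => μ (Icc 0 u)) n j))
      - stieltjesIntegral S μ T| ≤ ε * (μ.totalVariation (Icc 0 T)).toReal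
    ∧ (∑ j ∈ Finset.range n, S (((j:ℝ)+1)*T/n) *
        |bval T (fun u => μ (Icc 0 u)) n (j+1) - bval T (fun u => μ (Icc 0 u)) n j|)
      ≤ totalVarIntegral S μ T + ε * (μ.totalVariation (Icc 0 T)).toReal := by
  have hn0 : (0:ℝ) < n := by positivity
  have hTn : (n:ℝ) * T / n = T := by field_simp
  have hPQ : ∀ (m : Measure ℝ) [IsFiniteMeasure m], ∀ A ⊆ Icc (0:ℝ) T, IntegrableOn S A m :=
    fun m _ A hA => int_on hS m hA
  obtain ⟨ih1, ih2⟩ := sum_est T hT S hS hSpos μ hn hε hmod (n-1) (by omega) le_rfl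
  have ecast : ((↑(n-1) : ℝ)) = (n:ℝ) - 1 := by
    have : 1 ≤ n := by omega
    push_cast [Nat.cast_sub this]
    ring
  set a : ℝ := ((↑(n-1) : ℝ) - 1) * T / n with ha_def
  have ha2 : a = ((n:ℝ) - 2) * T / n := by rw [ha_def, ecast]; ring
  have hn2 : (2:ℝ) ≤ (n:ℝ) := by exact_mod_cast hn
  have ha0 : 0 ≤ a := by rw [ha2]; apply div_nonneg (mul_nonneg (by linarith) hT.le) hn0.le
  have haT : a ≤ T := by
    rw [ha2]
    have := grid_mono hT n (by linarith : (n:ℝ) - 2 ≤ (n:ℝ))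
    linarith [this.trans_eq hTn]
  have hTa : T - a = 2 * T / n := by
    have h' : ((n:ℝ)-2)*T/n + 2*T/n = T := by
      rw [← add_div, show ((n:ℝ)-2)*T + 2*T = (n:ℝ)*T from by ring]
      exact hTn
    rw [ha2]; linarith
  have hsub : Ioc a T ⊆ Icc (0:ℝ) T := fun u hu => ⟨ha0.trans hu.1.le, hu.2⟩
  have hsuba : Icc (0:ℝ) a ⊆ Icc 0 T := Icc_subset_Icc le_rfl haT
  have hTmem : T ∈ Icc (0:ℝ) T := ⟨hT.le, le_rfl⟩
  have hc : ∀ u ∈ Ioc a T, |S u - S T| ≤ ε := by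
    intro u hu
    apply hmod u (hsub hu) T hTmem
    rw [abs_of_nonpos (by linarith [hu.2])]
    linarith [hu.1]
  have hsplit : ∑ j ∈ Finset.range n, S (((j:ℝ)+1)*T/n) *
        (bval T (fun u => μ (Icc 0 u)) n (j+1) - bval T (fun u => μ (Icc 0 u)) n j)
      = (∑ j ∈ Finset.range (n-1), S (((j:ℝ)+1)*T/n) *
        (bval T (fun u => μ (Icc 0 u)) n (j+1) - bval T (fun u => μ (Icc 0 u)) n j))
        + S (((↑(n-1):ℝ)+1)*T/n) *
          (bval T (fun u => μ (Icc 0 u)) n ((n-1)+1) - bval T (fun u => μ (Icc 0 u)) n (n-1)) := by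
    rw [← Finset.sum_range_succ, show n - 1 + 1 = n from by omega]
  have hsplitabs : ∑ j ∈ Finset.range n, S (((j:ℝ)+1)*T/n) *
        |bval T (fun u => μ (Icc 0 u)) n (j+1) - bval T (fun u => μ (Icc 0 u)) n j|
      = (∑ j ∈ Finset.range (n-1), S (((j:ℝ)+1)*T/n) *
        |bval T (fun u => μ (Icc 0 u)) n (j+1) - bval T (fun u => μ (Icc 0 u)) n j|)
        + S (((↑(n-1):ℝ)+1)*T/n) *
          |bval T (fun u => μ (Icc 0 u)) n ((n-1)+1) - bval T (fun u => μ (Icc 0 u)) n (n-1)| := by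
    rw [← Finset.sum_range_succ, show n - 1 + 1 = n from by omega]
  have exT : ((↑(n-1):ℝ)+1)*T/n = T := by rw [ecast, sub_add_cancel]; exact hTn
  have ebtop : bval T (fun u => μ (Icc 0 u)) n ((n-1)+1) = 0 := by
    have : (n-1)+1 = n := by omega
    rw [this, bval_top]
  have ebprev : bval T (fun u => μ (Icc 0 u)) n (n-1) = μ (Icc 0 a) := by
    rw [bval_apply T _ (by omega) (by omega)]
  have hd : bval T (fun u => μ (Icc 0 u)) n ((n-1)+1) - bval T (fun u => μ (Icc 0 u)) n (n-1)
      = μ (Ioc a T) := by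
    rw [ebtop, ebprev]
    have := sm_split μ ha0 haT
    rw [hliq] at this
    linarith
  have hsplitp := int_split μ.toJordanDecomposition.posPart ha0 haT (hPQ _ _ hsuba) (hPQ _ _ hsub)
  have hsplitq := int_split μ.toJordanDecomposition.negPart ha0 haT (hPQ _ _ hsuba) (hPQ _ _ hsub)
  have hsplitv := int_split μ.totalVariation ha0 haT (hPQ _ _ hsuba) (hPQ _ _ hsub)
  have hms := meas_split μ.totalVariation ha0 haT
  have hsmall := small_signed μ measurableSet_Ioc (hPQ _ _ hsub) (hPQ _ _ hsub) hc
  have hsmalltv := small_tv μ measurableSet_Ioc (hPQ _ _ hsub) hc (hSpos _ hTmem).le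
  constructor
  · rw [hsplit, hd, exT, stieltjesIntegral, hsplitp, hsplitq]
    rw [stieltjesIntegral] at ih1
    have hre : ∀ A B C D E F : ℝ, A + B - (C + D - (E + F)) = (A - (C - E)) + (B - (D - F)) := by
      intros; ring
    rw [hre]
    rw [hms, mul_add]
    exact (abs_add_le _ _).trans (add_le_add ih1 hsmall)
  · rw [hsplitabs, hd, exT, totalVarIntegral, hsplitv, hms]
    rw [totalVarIntegral] at ih2
    linarith


set_option maxHeartbeats 2000000 in
/-- Inequality (4.8) in Step 2 of the proof of Lemma 4.2 of the paper: for a strategy `γ`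
(encoded by the signed measure `μ`, `γ_t = μ([0,t])`) with `γ_T = 0`, the running minima of
the discretized wealth processes satisfy
`liminf_n inf_{0≤t≤T} V^{γ̄^n}_t ≥ inf_{0≤t≤T} V^γ_t`. -/
theorem stmt_11 (T κ : ℝ) (hT : 0 < T) (hκ : κ ∈ Set.Ioo (0:ℝ) 1)
    (S : ℝ → ℝ) (hS : ContinuousOn S (Icc 0 T)) (hSpos : ∀ t ∈ Icc (0:ℝ) T, 0 < S t)
    (μ : SignedMeasure ℝ) (hliq : μ (Icc 0 T) = 0) :
    (⨅ t : Set.Icc (0:ℝ) T, portfolioValue κ S μ t) ≤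
      Filter.liminf
        (fun n => ⨅ t : Set.Icc (0:ℝ) T,
          stepPortfolioValue T κ S (fun u => μ (Icc 0 u)) n t)
        Filter.atTop := by
  obtain ⟨hκ0, hκ1⟩ := hκ
  haveI : Nonempty ↑(Icc (0:ℝ) T) := ⟨⟨0, ⟨le_rfl, hT.le⟩⟩⟩
  have hPQ : ∀ (m : Measure ℝ) [IsFiniteMeasure m], ∀ A ⊆ Icc (0:ℝ) T, IntegrableOn S A m :=
    fun m _ A hA => int_on hS m hA
  set M : ℝ := (μ.totalVariation Set.univ).toReal with hM_def
  have hM : ∀ s : Set ℝ, (μ.totalVariation s).toReal ≤ M :=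
    fun s => ENNReal.toReal_mono (measure_ne_top _ _) (measure_mono (subset_univ _))
  have hM0 : 0 ≤ M := ENNReal.toReal_nonneg
  have hγbd : ∀ t : ℝ, |μ (Icc 0 t)| ≤ M :=
    fun t => (abs_apply_le_tv μ measurableSet_Icc).trans (hM _)
  obtain ⟨B, hB⟩ := isCompact_Icc.exists_bound_of_continuousOn hS
  have hB' : ∀ x ∈ Icc (0:ℝ) T, |S x| ≤ B := fun x hx => hB x hx
  have hB0 : 0 ≤ B := (abs_nonneg _).trans (hB' 0 ⟨le_rfl, hT.le⟩)
  -- bounds on the integrals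
  have hIbd : ∀ (m : Measure ℝ) [IsFiniteMeasure m], ∀ t ∈ Icc (0:ℝ) T,
      |∫ u in Icc 0 t, S u ∂m| ≤ B * (m (Icc 0 t)).toReal := by
    intro m _ t ht
    have := norm_setIntegral_le_of_norm_le_const (μ := m) (s := Icc 0 t) (f := S) (C := B)
      (measure_lt_top _ _)
      (fun x hx => hB' x (Icc_subset_Icc le_rfl ht.2 hx))
    simpa [mul_comm, Measure.real] using this
  have hSIbd : ∀ t ∈ Icc (0:ℝ) T, |stieltjesIntegral S μ t| ≤ B * M := by
    intro t ht
    rw [stieltjesIntegral]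
    have h1 := hIbd μ.toJordanDecomposition.posPart t ht
    have h2 := hIbd μ.toJordanDecomposition.negPart t ht
    have h3 := tv_toReal μ (Icc 0 t)
    have h4 := hM (Icc 0 t)
    have hp0 : (0:ℝ) ≤ (μ.toJordanDecomposition.posPart (Icc 0 t)).toReal := ENNReal.toReal_nonneg
    have hq0 : (0:ℝ) ≤ (μ.toJordanDecomposition.negPart (Icc 0 t)).toReal := ENNReal.toReal_nonneg
    have := (abs_sub _ _).trans (add_le_add h1 h2)
    nlinarith
  have hTVbd : ∀ t ∈ Icc (0:ℝ) T, |totalVarIntegral S μ t| ≤ B * M := by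
    intro t ht
    rw [totalVarIntegral]
    have h1 := hIbd μ.totalVariation t ht
    have h4 := hM (Icc 0 t)
    have h0 : (0:ℝ) ≤ (μ.totalVariation (Icc 0 t)).toReal := ENNReal.toReal_nonneg
    nlinarith
  -- lower bound for the continuous portfolio value
  have hVlb : ∀ t ∈ Icc (0:ℝ) T, -(4*(M+1)*(B+1)) ≤ portfolioValue κ S μ t := by
    intro t ht
    rw [portfolioValue]
    have h1 := hγbd t
    have h2 := hB' t ht
    have h3 := hSIbd t ht
    have h4 := hTVbd t ht
    have h5 : |μ (Icc 0 t) * S t| ≤ M * B := by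
      rw [abs_mul]
      exact mul_le_mul h1 h2 (abs_nonneg _) hM0
    have hSt : 0 < S t := hSpos t ht
    have hx : 0 ≤ |μ (Icc 0 t)| * S t := mul_nonneg (abs_nonneg _) hSt.le
    have h6 : κ * |μ (Icc 0 t)| * S t ≤ M * B := by
      have hMB : |μ (Icc 0 t)| * S t ≤ M * B :=
        mul_le_mul h1 ((le_abs_self _).trans h2) hSt.le hM0
      calc κ * |μ (Icc 0 t)| * S t = κ * (|μ (Icc 0 t)| * S t) := by ring
        _ ≤ 1 * (|μ (Icc 0 t)| * S t) := mul_le_mul_of_nonneg_right hκ1.le hx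
        _ = |μ (Icc 0 t)| * S t := one_mul _
        _ ≤ M * B := hMB
    have h7 := abs_le.1 h5
    have h8 := abs_le.1 h3
    have h9 := abs_le.1 h4
    nlinarith
  have hbdd : BddBelow (Set.range fun t : Set.Icc (0:ℝ) T => portfolioValue κ S μ ↑t) := by
    refine ⟨-(4*(M+1)*(B+1)), ?_⟩
    rintro _ ⟨t, rfl⟩
    exact hVlb t t.2
  have hInfLe : ∀ τ ∈ Icc (0:ℝ) T,
      (⨅ t : Set.Icc (0:ℝ) T, portfolioValue κ S μ t) ≤ portfolioValue κ S μ τ :=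
    fun τ hτ => ciInf_le hbdd ⟨τ, hτ⟩
  -- value at time 0 is nonpositive
  have hsub0 : Icc (0:ℝ) 0 ⊆ Icc 0 T := Icc_subset_Icc le_rfl hT.le
  have hc0 : ∀ u ∈ Icc (0:ℝ) 0, |S u - S 0| ≤ (0:ℝ) := by
    intro u hu
    have : u = 0 := le_antisymm hu.2 hu.1
    simp [this]
  have hV0 : portfolioValue κ S μ 0 ≤ 0 := by
    have hs0 := small_signed μ measurableSet_Icc (hPQ _ _ hsub0) (hPQ _ _ hsub0) hc0
    have ht0 := small_tv μ measurableSet_Icc (hPQ _ _ hsub0) hc0 (hSpos 0 ⟨le_rfl, hT.le⟩).le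
    rw [zero_mul] at hs0 ht0
    have hEq : stieltjesIntegral S μ 0 = S 0 * μ (Icc 0 0) := by
      rw [stieltjesIntegral]
      have := abs_nonpos_iff.1 hs0
      linarith
    have hTV0 : S 0 * |μ (Icc 0 0)| ≤ totalVarIntegral S μ 0 := by
      rw [totalVarIntegral]; linarith
    rw [portfolioValue, hEq]
    have hS0 := hSpos 0 ⟨le_rfl, hT.le⟩
    have habs : 0 ≤ |μ (Icc 0 0)| := abs_nonneg _
    have h1 : 0 ≤ S 0 * |μ (Icc 0 0)| := mul_nonneg hS0.le habs
    nlinarith [le_abs_self (μ (Icc 0 0)), neg_abs_le (μ (Icc 0 0))]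
  -- step value vanishes near zero
  have hWzero : ∀ n : ℕ, 2 ≤ n → ∀ t : ℝ, 0 ≤ t → t < 1 * T / n →
      stepPortfolioValue T κ S (fun u => μ (Icc 0 u)) n t = 0 := by
    intro n hn t ht0 ht1
    have hn0 : (0:ℝ) < n := by positivity
    have hi0 : (0:ℕ) < n := by omega
    have e0 : ((0:ℕ):ℝ) * T / n ≤ t := by simpa using ht0
    have e1 : t < (((0:ℕ):ℝ) + 1) * T / n := by
      simpa using ht1
    rw [stepPortfolioValue, gbar_zero hT _ ht1]
    simp only [mul_assoc]
    rw [ind_sum hT hi0 e0 e1, ind_sum hT hi0 e0 e1]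
    simp
  -- main ε-argument
  set IV : ℝ := ⨅ t : Set.Icc (0:ℝ) T, portfolioValue κ S μ t with hIV_def
  have main : ∀ ε : ℝ, 0 < ε → ∃ N : ℕ, 2 ≤ N ∧ ∀ n ≥ N, ∀ t ∈ Icc (0:ℝ) T,
      IV - ε ≤ stepPortfolioValue T κ S (fun u => μ (Icc 0 u)) n t := by
    intro ε hε
    set ε' : ℝ := ε / (4 * (M + 1)) with hε'_def
    have hε'0 : 0 < ε' := by positivity
    have hUC := isCompact_Icc.uniformContinuousOn_of_continuous (s := Icc (0:ℝ) T) hS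
    rw [Metric.uniformContinuousOn_iff_le] at hUC
    obtain ⟨δ, hδ0, hδ⟩ := hUC ε' hε'0
    obtain ⟨N0, hN0⟩ := exists_nat_gt (2 * T / δ)
    refine ⟨max N0 2, le_max_right _ _, ?_⟩
    intro n hn t ht
    have hn2 : 2 ≤ n := le_trans (le_max_right _ _) hn
    have hn0 : (0:ℝ) < n := by positivity
    have hnN0 : (N0:ℝ) ≤ n := by exact_mod_cast le_trans (le_max_left _ _) hn
    have h2Tn : 2 * T / n ≤ δ := by
      rw [div_le_iff₀ hn0]
      have h1 : 2 * T / δ < (n:ℝ) := lt_of_lt_of_le hN0 hnN0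
      rw [div_lt_iff₀ hδ0] at h1
      nlinarith
    have hmod : ∀ x ∈ Icc (0:ℝ) T, ∀ y ∈ Icc (0:ℝ) T, |x - y| ≤ 2 * T / n →
        |S x - S y| ≤ ε' := by
      intro x hx y hy hxy
      have := hδ x hx y hy (by rw [Real.dist_eq]; linarith)
      rwa [Real.dist_eq] at this
    have hTn : (n:ℝ) * T / n = T := by field_simp
    have hεprod : ε' * (4 * (M + 1)) = ε := by
      rw [hε'_def]; field_simp
    have hεbig : 4 * M * ε' ≤ ε := by nlinarith [hε'0.le, hM0]
    rcases eq_or_lt_of_le ht.2 with htT | htT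
    · -- t = T
      rw [htT]
      obtain ⟨e1, e2⟩ := sum_est_T T hT S hS hSpos μ hliq hn2 hε'0.le hmod
      rw [stepPortfolioValue, gbar_T hT]
      simp only [mul_assoc]
      rw [ind_sum_T hT (by omega : 1 ≤ n), ind_sum_T hT (by omega : 1 ≤ n)]
      have hVT := hInfLe T ⟨hT.le, le_rfl⟩
      rw [portfolioValue, hliq] at hVT
      set νT : ℝ := (μ.totalVariation (Icc 0 T)).toReal with hνT_def
      have hν0 : 0 ≤ νT := ENNReal.toReal_nonneg
      have hMt := hM (Icc 0 T)
      have habs1 := abs_le.1 e1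
      have F2 : κ * (∑ j ∈ Finset.range n, S (((j:ℝ)+1)*T/n) *
          |bval T (fun u => μ (Icc 0 u)) n (j+1) - bval T (fun u => μ (Icc 0 u)) n j|)
          ≤ κ * (totalVarIntegral S μ T + ε' * νT) :=
        mul_le_mul_of_nonneg_left e2 hκ0.le
      have F6 : ε' * νT ≤ ε' * M := mul_le_mul_of_nonneg_left hMt hε'0.le
      have F8 : κ * (ε' * νT) ≤ ε' * M := by nlinarith
      simp only [abs_zero, mul_zero, zero_mul, zero_sub] at hVT ⊢
      linarith [habs1.1, habs1.2, hVT, F2, F6, F8, hεbig, mul_nonneg hM0 hε'0.le]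
    · -- t < T
      set i : ℕ := ⌊t * n / T⌋₊ with hi_def
      have htn0 : 0 ≤ t * n / T := div_nonneg (mul_nonneg ht.1 hn0.le) hT.le
      have hfl : (i:ℝ) ≤ t * n / T := Nat.floor_le htn0
      have hfl2 : t * n / T < (i:ℝ) + 1 := Nat.lt_floor_add_one _
      have ht1 : (i:ℝ) * T / n ≤ t := by
        rw [div_le_iff₀ hn0]
        rw [le_div_iff₀ hT] at hfl
        linarith
      have ht2 : t < ((i:ℝ) + 1) * T / n := by
        rw [lt_div_iff₀ hn0]
        rw [div_lt_iff₀ hT] at hfl2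
        linarith
      have hiN : i < n := by
        have h1 : t * n / T < (n:ℝ) := by
          rw [div_lt_iff₀ hT]
          nlinarith
        have h2 : (i:ℝ) < (n:ℝ) := lt_of_le_of_lt hfl h1
        exact_mod_cast h2
      rcases Nat.eq_zero_or_pos i with hi0 | hi1
      · -- i = 0 : step value is 0
        have ht2' : t < 1 * T / n := by
          rw [hi0] at ht2
          simpa using ht2
        rw [hWzero n hn2 t ht.1 ht2']
        have := hInfLe 0 ⟨le_rfl, hT.le⟩
        linarith
      · -- 1 ≤ i
        have hin1 : i ≤ n - 1 := by omega
        set τ : ℝ := ((i:ℝ) - 1) * T / n with hτ_def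
        have hi' : (1:ℝ) ≤ (i:ℝ) := by exact_mod_cast hi1
        have hiTn : (i:ℝ) ≤ (n:ℝ) := by exact_mod_cast hiN.le
        have hτ0 : 0 ≤ τ := div_nonneg (mul_nonneg (by linarith) hT.le) hn0.le
        have hτT : τ ≤ T := by
          have := grid_mono hT n (by linarith : (i:ℝ) - 1 ≤ (n:ℝ))
          linarith [this.trans_eq hTn]
        have hτmem : τ ∈ Icc (0:ℝ) T := ⟨hτ0, hτT⟩
        have htτ : |t - τ| ≤ 2 * T / n := by
          have h1 : τ ≤ (i:ℝ) * T / n := grid_mono hT n (by linarith)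
          have h2 : ((i:ℝ) + 1) * T / n - τ = 2 * T / n := by
            rw [hτ_def]; ring
          rw [abs_of_nonneg (by linarith)]
          linarith
        have hSd := hmod t ht τ hτmem htτ
        obtain ⟨e1, e2⟩ := sum_est T hT S hS hSpos μ hn2 hε'0.le hmod i hi1 hin1
        rw [stepPortfolioValue, gbar_apply hT _ hi1 hiN ht1 ht2]
        simp only [mul_assoc]
        rw [ind_sum hT hiN ht1 ht2, ind_sum hT hiN ht1 ht2]
        have hVτ := hInfLe τ hτmem
        rw [portfolioValue] at hVτ
        set ντ : ℝ := (μ.totalVariation (Icc 0 τ)).toReal with hντ_def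
        have hν0 : 0 ≤ ντ := ENNReal.toReal_nonneg
        have hMt := hM (Icc 0 τ)
        have habs1 := abs_le.1 e1
        have hγτ := hγbd τ
        have hγabs := abs_nonneg (μ (Icc 0 τ))
        have hSdabs := abs_le.1 hSd
        have hA : μ (Icc 0 τ) * S t - μ (Icc 0 τ) * S τ ≥ -(M * ε') := by
          have habsmul : |μ (Icc 0 τ) * (S t - S τ)| ≤ M * ε' := by
            rw [abs_mul]
            exact mul_le_mul hγτ hSd (abs_nonneg _) hM0
          nlinarith [neg_abs_le (μ (Icc 0 τ) * (S t - S τ))]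
        have hA2 : κ * (|μ (Icc 0 τ)| * S t) - κ * (|μ (Icc 0 τ)| * S τ) ≤ M * ε' := by
          have h1 : |μ (Icc 0 τ)| * S t - |μ (Icc 0 τ)| * S τ ≤ M * ε' := by
            have h2 : |μ (Icc 0 τ)| * (S t - S τ) ≤ |μ (Icc 0 τ)| * |S t - S τ| :=
              mul_le_mul_of_nonneg_left (le_abs_self _) hγabs
            nlinarith [mul_le_mul hγτ (abs_nonneg (S t - S τ) |>.trans_eq rfl |> fun _ => hSd) (abs_nonneg _) hM0]
          have hMε : 0 ≤ M * ε' := mul_nonneg hM0 hε'0.le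
          rcases le_or_gt (|μ (Icc 0 τ)| * S t - |μ (Icc 0 τ)| * S τ) 0 with h | h
          · nlinarith
          · nlinarith
        have F2 : κ * (∑ j ∈ Finset.range i, S (((j:ℝ)+1)*T/n) *
            |bval T (fun u => μ (Icc 0 u)) n (j+1) - bval T (fun u => μ (Icc 0 u)) n j|)
            ≤ κ * (totalVarIntegral S μ τ + ε' * ντ) :=
          mul_le_mul_of_nonneg_left e2 hκ0.le
        have F6 : ε' * ντ ≤ ε' * M := mul_le_mul_of_nonneg_left hMt hε'0.le
        have F8 : κ * (ε' * ντ) ≤ ε' * M := by nlinarith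
        linarith [habs1.1, habs1.2, hVτ, F2, F6, F8, hεbig, hA, hA2,
          mul_nonneg hM0 hε'0.le]
  -- conclude via liminf
  have hW0le : ∀ᶠ n in Filter.atTop,
      (⨅ t : Set.Icc (0:ℝ) T, stepPortfolioValue T κ S (fun u => μ (Icc 0 u)) n ↑t) ≤ 0 := by
    obtain ⟨N, hN2, hclaim⟩ := main 1 one_pos
    refine Filter.eventually_atTop.2 ⟨N, fun n hn => ?_⟩
    have hbddW : BddBelow (Set.range fun t : Set.Icc (0:ℝ) T =>
        stepPortfolioValue T κ S (fun u => μ (Icc 0 u)) n ↑t) := by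
      refine ⟨IV - 1, ?_⟩
      rintro _ ⟨t, rfl⟩
      exact hclaim n hn t t.2
    have hN2' : 2 ≤ n := le_trans hN2 hn
    have h0mem : (0:ℝ) ∈ Icc (0:ℝ) T := ⟨le_rfl, hT.le⟩
    have := ciInf_le hbddW ⟨0, h0mem⟩
    rw [hWzero n hN2' 0 le_rfl (by positivity)] at this
    exact this
  have hcob : Filter.IsCoboundedUnder (· ≥ ·) Filter.atTop
      (fun n => ⨅ t : Set.Icc (0:ℝ) T, stepPortfolioValue T κ S (fun u => μ (Icc 0 u)) n ↑t) :=
    Filter.IsBoundedUnder.isCoboundedUnder_ge ⟨0, hW0le⟩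
  refine le_of_forall_pos_le_add ?_
  intro ε hε
  have hlim : IV - ε ≤ Filter.liminf
      (fun n => ⨅ t : Set.Icc (0:ℝ) T, stepPortfolioValue T κ S (fun u => μ (Icc 0 u)) n ↑t)
      Filter.atTop := by
    apply Filter.le_liminf_of_le hcob
    obtain ⟨N, _, hclaim⟩ := main ε hε
    refine Filter.eventually_atTop.2 ⟨N, fun n hn => ?_⟩
    exact le_ciInf fun t => hclaim n hn t t.2
  linarith
end
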